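/- arXiv:1307.1901 — 4 statements merged into one kernel-verified Lean document; each statement's English description precedes it below -/
import Mathlib

section
/- Let n, k ≥ 0 and let λ be a partition with ℓ(λ) ≤ n and λ₁ ≤ k. Define α_i = λ_{n+1−i} + i for 1 ≤ i ≤ n and β_j = n + j − λ†_j for 1 ≤ j ≤ k, and let s = (β_k, β_{k−1}, …, β_1, α_n, α_{n−1}, …, α_1) be the concatenated sequence of length n+k. Then the number of inversions of s, namely #{(p,q) : 1 ≤ p < q ≤ n+k, s_p < s_q}, equals |λ|. -/
/-- A partition: a weakly decreasing sequence of nonnegative integers, indexed starting at 1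
(`f 0 = 0` by convention), with finitely many nonzero terms. `f i` is the part `λ_i`. -/
structure YPartition where
  f : ℕ → ℕ
  f_zero : f 0 = 0
  antitone : ∀ ⦃i j : ℕ⦄, 1 ≤ i → i ≤ j → f j ≤ f i
  ev_zero : ∃ N, ∀ i, N ≤ i → f i = 0

namespace YPartition

/-- The number of nonzero parts `ℓ(λ)`. -/
noncomputable def len (p : YPartition) : ℕ := sSup {i | p.f i ≠ 0}

/-- The size `|λ| = Σ_i λ_i`. -/
noncomputable def size (p : YPartition) : ℕ := ∑ᶠ i, p.f i

/-- The transpose (conjugate): `g† j = #{i ≥ 1 : g i ≥ j}`. -/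
noncomputable def conjFun (g : ℕ → ℕ) (j : ℕ) : ℕ := Set.ncard {i | 1 ≤ i ∧ j ≤ g i}

/-- Containment of partitions: `ν ⊆ μ`. -/
def Sub (ν μ : YPartition) : Prop := ∀ i, ν.f i ≤ μ.f i

/-- The cells (boxes) of the skew diagram `μ/ν`: pairs `(i,j)` with `i ≥ 1` and
`ν_i < j ≤ μ_i`. -/
def cells (μ ν : YPartition) : Set (ℕ × ℕ) :=
  {c | 1 ≤ c.1 ∧ ν.f c.1 < c.2 ∧ c.2 ≤ μ.f c.1}

/-- Two boxes share an edge. -/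
def Adj (a b : ℕ × ℕ) : Prop :=
  (a.1 = b.1 ∧ (a.2 + 1 = b.2 ∨ b.2 + 1 = a.2)) ∨
  (a.2 = b.2 ∧ (a.1 + 1 = b.1 ∨ b.1 + 1 = a.1))

/-- A set of boxes is connected if any two of its boxes are joined by a chain of its
boxes, each sharing an edge with the next. -/
def IsConnected (s : Set (ℕ × ℕ)) : Prop :=
  ∀ a ∈ s, ∀ b ∈ s, Relation.ReflTransGen (fun x y => x ∈ s ∧ y ∈ s ∧ Adj x y) a b

/-- `μ/ν` is a border strip: `ν ⊆ μ`, and the skew diagram is nonempty, connected,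
and contains no 2×2 square. -/
def IsBorderStrip (μ ν : YPartition) : Prop :=
  Sub ν μ ∧ (cells μ ν).Nonempty ∧ IsConnected (cells μ ν) ∧
    ¬ ∃ i j : ℕ, (i, j) ∈ cells μ ν ∧ (i + 1, j) ∈ cells μ ν ∧
      (i, j + 1) ∈ cells μ ν ∧ (i + 1, j + 1) ∈ cells μ ν

/-- The number of boxes of `μ/ν`. -/
noncomputable def stripSize (μ ν : YPartition) : ℕ := (cells μ ν).ncard

/-- The number of rows that `μ/ν` occupies. -/
noncomputable def rows (μ ν : YPartition) : ℕ := (Prod.fst '' cells μ ν).ncard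

/-- The number of columns that `μ/ν` occupies. -/
noncomputable def cols (μ ν : YPartition) : ℕ := (Prod.snd '' cells μ ν).ncard

/-- The graph of the symplectic modification rule: `ModRule n μ i τ` holds iff
`i_{2n}(μ) = i < ∞` and `τ_{2n}(μ) = τ`. -/
inductive ModRule (n : ℕ) : YPartition → ℕ → YPartition → Prop
  | base (μ : YPartition) (h : μ.len ≤ n) : ModRule n μ 0 μ
  | step (μ ν τ : YPartition) (i : ℕ)
      (hlen : n < μ.len)
      (hbs : IsBorderStrip μ ν)
      (hsize : stripSize μ ν = 2 * (μ.len - n - 1))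
      (hbox : (μ.len, 1) ∈ cells μ ν)
      (hrec : ModRule n ν i τ) :
      ModRule n μ (cols μ ν + i) τ

/-- `i_{2n}(μ) ∈ ℕ∞`; it is `⊤ = ∞` exactly when the modification rule fails. -/
noncomputable def i2 (n : ℕ) (μ : YPartition) : ℕ∞ :=
  sInf {c | ∃ i τ, ModRule n μ i τ ∧ c = (i : ℕ∞)}

-- `τ_{2n}(μ)`, defined (arbitrarily, as `μ` itself) when `i_{2n}(μ) = ∞`.
open Classical in
noncomputable def tau (n : ℕ) (μ : YPartition) : YPartition :=
  if h : ∃ it : ℕ × YPartition, ModRule n μ it.1 it.2 then h.choose.2 else μ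

end YPartition


namespace Aux
open YPartition

lemma ncard_Icc (a b : ℕ) : (Set.Icc a b).ncard = b + 1 - a := by
  rw [Set.ncard_eq_toFinset_card']; simp

lemma le_len (p : YPartition) {m : ℕ} (h : p.f m ≠ 0) : m ≤ p.len := by
  obtain ⟨N, hN⟩ := p.ev_zero
  refine le_csSup ⟨N, fun i hi => ?_⟩ h
  by_contra hc
  exact hi (hN i (by omega))

lemma conj_subset (p : YPartition) {j : ℕ} (hj : 1 ≤ j) :
    {i | 1 ≤ i ∧ j ≤ p.f i} ⊆ Set.Icc 1 p.len := by
  rintro t ⟨ht1, ht2⟩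
  exact ⟨ht1, le_len p (by omega)⟩

lemma conj_le_len (p : YPartition) {j : ℕ} (hj : 1 ≤ j) : conjFun p.f j ≤ p.len := by
  have := Set.ncard_le_ncard (conj_subset p hj) (Set.finite_Icc _ _)
  rwa [ncard_Icc, Nat.add_sub_cancel] at this

lemma conj_fin (p : YPartition) {j : ℕ} (hj : 1 ≤ j) : Set.Finite {i | 1 ≤ i ∧ j ≤ p.f i} :=
  Set.Finite.subset (Set.finite_Icc _ _) (conj_subset p hj)

lemma le_conj (p : YPartition) {j m : ℕ} (hj : 1 ≤ j) (h : j ≤ p.f m) :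
    m ≤ conjFun p.f j := by
  have hsub : Set.Icc 1 m ⊆ {i | 1 ≤ i ∧ j ≤ p.f i} := by
    rintro t ⟨ht1, ht2⟩
    exact ⟨ht1, le_trans h (p.antitone ht1 ht2)⟩
  have := Set.ncard_le_ncard hsub (conj_fin p hj)
  rwa [ncard_Icc, Nat.add_sub_cancel] at this

lemma conj_lt (p : YPartition) {j m : ℕ} (hj : 1 ≤ j) (hm : 1 ≤ m) (h : p.f m < j) :
    conjFun p.f j < m := by
  have hsub : {i | 1 ≤ i ∧ j ≤ p.f i} ⊆ Set.Icc 1 (m - 1) := by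
    rintro t ⟨ht1, ht2⟩
    refine ⟨ht1, ?_⟩
    by_contra hc
    have := p.antitone hm (show m ≤ t by omega)
    omega
  have h2 := Set.ncard_le_ncard hsub (Set.finite_Icc _ _)
  rw [ncard_Icc] at h2
  unfold conjFun
  omega

end Aux


open YPartition in
/-- For a partition `λ` fitting in an `n × k` rectangle, the number of
inversions of the sequence `s = (β_k, …, β_1, α_n, …, α_1)` equals `|λ|`. -/
theorem statement1 (n k : ℕ) (lam : YPartition) (hlen : lam.len ≤ n) (hwidth : lam.f 1 ≤ k)
    (α : ℕ → ℕ) (β : ℕ → ℕ) (s : ℕ → ℕ)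
    (hα : ∀ i, α i = lam.f (n + 1 - i) + i)
    (hβ : ∀ j, β j = n + j - conjFun lam.f j)
    (hs : ∀ p, 1 ≤ p → p ≤ n + k → s p = if p ≤ k then β (k + 1 - p) else α (n + k + 1 - p)) :
    (((Finset.Icc 1 (n + k)) ×ˢ (Finset.Icc 1 (n + k))).filter
        (fun pq => pq.1 < pq.2 ∧ s pq.1 < s pq.2)).card = lam.size := by
  
  classical
  have hfk : ∀ m, 1 ≤ m → lam.f m ≤ k := fun m hm => le_trans (lam.antitone le_rfl hm) hwidth
  have hc_le : ∀ j, 1 ≤ j → conjFun lam.f j ≤ n :=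
    fun j hj => le_trans (Aux.conj_le_len lam hj) hlen
  have key : ∀ i j, 1 ≤ i → i ≤ n → 1 ≤ j → j ≤ k →
      (β j < α i ↔ j ≤ lam.f (n + 1 - i)) := by
    intro i j hi1 hin hj1 hjk
    rw [hα, hβ]
    have hm1 : 1 ≤ n + 1 - i := by omega
    have hcn : conjFun lam.f j ≤ n := hc_le j hj1
    rcases le_or_gt j (lam.f (n + 1 - i)) with h | h
    · have := Aux.le_conj lam hj1 h
      constructor <;> intro <;> omega
    · have := Aux.conj_lt lam hj1 hm1 h
      constructor <;> intro <;> omega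
  have hαmono : ∀ i i', 1 ≤ i → i < i' → i' ≤ n → α i < α i' := by
    intro i i' h1 h2 h3
    rw [hα, hα]
    have := lam.antitone (show 1 ≤ n + 1 - i' by omega) (show n + 1 - i' ≤ n + 1 - i by omega)
    omega
  have hβmono : ∀ j j', 1 ≤ j → j < j' → j' ≤ k → β j < β j' := by
    intro j j' h1 h2 h3
    rw [hβ, hβ]
    have hc1 := hc_le j h1
    have hmono : conjFun lam.f j' ≤ conjFun lam.f j :=
      Set.ncard_le_ncard (fun t ht => ⟨ht.1, le_trans (by omega) ht.2⟩) (Aux.conj_fin lam h1)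
    omega
  have hset : (((Finset.Icc 1 (n + k)) ×ˢ (Finset.Icc 1 (n + k))).filter
        (fun pq => pq.1 < pq.2 ∧ s pq.1 < s pq.2)) =
      ((Finset.Icc 1 k) ×ˢ (Finset.Icc (k + 1) (k + n))).filter (fun pq => s pq.1 < s pq.2) := by
    ext ⟨p, q⟩
    simp only [Finset.mem_filter, Finset.mem_product, Finset.mem_Icc]
    constructor
    · rintro ⟨⟨⟨hp1, hp2⟩, hq1, hq2⟩, hpq, hs'⟩
      refine ⟨⟨⟨hp1, ?_⟩, ?_, by omega⟩, hs'⟩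
      · by_contra hc
        push_neg at hc
        rw [hs p hp1 hp2, hs q hq1 hq2, if_neg (by omega), if_neg (by omega)] at hs'
        have := hαmono (n + k + 1 - q) (n + k + 1 - p) (by omega) (by omega) (by omega)
        omega
      · by_contra hc
        push_neg at hc
        rw [hs p hp1 hp2, hs q hq1 hq2, if_pos (by omega), if_pos (by omega)] at hs'
        have := hβmono (k + 1 - q) (k + 1 - p) (by omega) (by omega) (by omega)
        try omega
    · rintro ⟨⟨⟨hp1, hp2⟩, hq1, hq2⟩, hs'⟩
      exact ⟨⟨⟨hp1, by omega⟩, by omega, by omega⟩, by omega, hs'⟩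
  rw [hset]
  have hcard : (((Finset.Icc 1 k) ×ˢ (Finset.Icc (k + 1) (k + n))).filter
        (fun pq => s pq.1 < s pq.2)).card
      = (((Finset.Icc 1 k) ×ˢ (Finset.Icc 1 n)).filter
        (fun ji => ji.1 ≤ lam.f (n + 1 - ji.2))).card := by
    apply Finset.card_bij' (fun pq _ => (k + 1 - pq.1, n + k + 1 - pq.2))
      (fun ji _ => (k + 1 - ji.1, n + k + 1 - ji.2))
    · rintro ⟨p, q⟩ hm
      simp only [Finset.mem_filter, Finset.mem_product, Finset.mem_Icc] at hm ⊢
      obtain ⟨⟨⟨hp1, hp2⟩, hq1, hq2⟩, hs'⟩ := hm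
      rw [hs p (by omega) (by omega), hs q (by omega) (by omega),
        if_pos (by omega), if_neg (by omega)] at hs'
      exact ⟨⟨⟨by omega, by omega⟩, by omega, by omega⟩,
        (key (n + k + 1 - q) (k + 1 - p) (by omega) (by omega) (by omega) (by omega)).mp hs'⟩
    · rintro ⟨j, i⟩ hm
      simp only [Finset.mem_filter, Finset.mem_product, Finset.mem_Icc] at hm ⊢
      obtain ⟨⟨⟨hj1, hj2⟩, hi1, hi2⟩, hle⟩ := hm
      refine ⟨⟨⟨by omega, by omega⟩, by omega, by omega⟩, ?_⟩
      rw [hs (k + 1 - j) (by omega) (by omega), hs (n + k + 1 - i) (by omega) (by omega),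
        if_pos (by omega), if_neg (by omega)]
      have h1 : k + 1 - (k + 1 - j) = j := by omega
      have h2 : n + k + 1 - (n + k + 1 - i) = i := by omega
      rw [h1, h2]
      exact (key i j (by omega) (by omega) (by omega) (by omega)).mpr hle
    · rintro ⟨p, q⟩ hm
      simp only [Finset.mem_filter, Finset.mem_product, Finset.mem_Icc] at hm
      simp only [Prod.mk.injEq]
      omega
    · rintro ⟨j, i⟩ hm
      simp only [Finset.mem_filter, Finset.mem_product, Finset.mem_Icc] at hm
      simp only [Prod.mk.injEq]
      omega
  rw [hcard, Finset.card_filter, Finset.sum_product, Finset.sum_comm]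
  have hrow : ∀ i ∈ Finset.Icc 1 n,
      (∑ j ∈ Finset.Icc 1 k, if j ≤ lam.f (n + 1 - i) then 1 else 0) = lam.f (n + 1 - i) := by
    intro i hi
    simp only [Finset.mem_Icc] at hi
    rw [← Finset.card_filter]
    have hf : (Finset.Icc 1 k).filter (fun j => j ≤ lam.f (n + 1 - i))
        = Finset.Icc 1 (lam.f (n + 1 - i)) := by
      ext t
      simp only [Finset.mem_filter, Finset.mem_Icc]
      have := hfk (n + 1 - i) (by omega)
      omega
    rw [hf, Nat.card_Icc]
    omega
  rw [Finset.sum_congr rfl hrow]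
  have hrefl : ∑ i ∈ Finset.Icc 1 n, lam.f (n + 1 - i) = ∑ m ∈ Finset.Icc 1 n, lam.f m := by
    refine Finset.sum_nbij' (fun i => n + 1 - i) (fun m => n + 1 - m) ?_ ?_ ?_ ?_ ?_ <;>
      · intro a ha
        simp only [Finset.mem_Icc] at *
        try omega
  rw [hrefl]
  have hsupp : Function.support lam.f ⊆ ↑(Finset.Icc 1 n) := by
    intro x hx
    simp only [Function.mem_support] at hx
    have h0 : x ≠ 0 := by
      intro h; rw [h, lam.f_zero] at hx; exact hx rfl
    have := Aux.le_len lam hx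
    simp only [Finset.coe_Icc, Set.mem_Icc]
    omega
  rw [size, finsum_eq_finset_sum_of_support_subset lam.f hsupp]
end

section
/- Let n ≥ 0 and let μ, ν, λ be partitions with ℓ(μ) > n and ℓ(ν) > n such that μ/ν is a border strip of size 2(ℓ(μ)−n−1) containing the box (ℓ(μ), 1), and ν/λ is a border strip of size 2(ℓ(ν)−n−1) containing the box (ℓ(ν), 1). Then c(μ/ν) > c(ν/λ). -/
/-- A partition: a weakly decreasing sequence of nonnegative integers, indexed starting at 1
(`f 0 = 0` by convention), with finitely many nonzero terms. `f i` is the part `λ_i`. -/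
structure Partition' where
  f : ℕ → ℕ
  f_zero : f 0 = 0
  antitone : ∀ ⦃i j : ℕ⦄, 1 ≤ i → i ≤ j → f j ≤ f i
  ev_zero : ∃ N, ∀ i, N ≤ i → f i = 0

namespace Partition'

/-- The number of nonzero parts `ℓ(λ)`. -/
noncomputable def len (p : Partition') : ℕ := sSup {i | p.f i ≠ 0}

/-- The size `|λ| = Σ_i λ_i`. -/
noncomputable def size (p : Partition') : ℕ := ∑ᶠ i, p.f i

/-- The transpose (conjugate): `g† j = #{i ≥ 1 : g i ≥ j}`. -/
noncomputable def conjFun (g : ℕ → ℕ) (j : ℕ) : ℕ := Set.ncard {i | 1 ≤ i ∧ j ≤ g i}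

/-- Containment of partitions: `ν ⊆ μ`. -/
def Sub (ν μ : Partition') : Prop := ∀ i, ν.f i ≤ μ.f i

/-- The cells (boxes) of the skew diagram `μ/ν`: pairs `(i,j)` with `i ≥ 1` and
`ν_i < j ≤ μ_i`. -/
def cells (μ ν : Partition') : Set (ℕ × ℕ) :=
  {c | 1 ≤ c.1 ∧ ν.f c.1 < c.2 ∧ c.2 ≤ μ.f c.1}

/-- Two boxes share an edge. -/
def Adj (a b : ℕ × ℕ) : Prop :=
  (a.1 = b.1 ∧ (a.2 + 1 = b.2 ∨ b.2 + 1 = a.2)) ∨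
  (a.2 = b.2 ∧ (a.1 + 1 = b.1 ∨ b.1 + 1 = a.1))

/-- A set of boxes is connected if any two of its boxes are joined by a chain of its
boxes, each sharing an edge with the next. -/
def IsConnected (s : Set (ℕ × ℕ)) : Prop :=
  ∀ a ∈ s, ∀ b ∈ s, Relation.ReflTransGen (fun x y => x ∈ s ∧ y ∈ s ∧ Adj x y) a b

/-- `μ/ν` is a border strip: `ν ⊆ μ`, and the skew diagram is nonempty, connected,
and contains no 2×2 square. -/
def IsBorderStrip (μ ν : Partition') : Prop :=
  Sub ν μ ∧ (cells μ ν).Nonempty ∧ IsConnected (cells μ ν) ∧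
    ¬ ∃ i j : ℕ, (i, j) ∈ cells μ ν ∧ (i + 1, j) ∈ cells μ ν ∧
      (i, j + 1) ∈ cells μ ν ∧ (i + 1, j + 1) ∈ cells μ ν

/-- The number of boxes of `μ/ν`. -/
noncomputable def stripSize (μ ν : Partition') : ℕ := (cells μ ν).ncard

/-- The number of rows that `μ/ν` occupies. -/
noncomputable def rows (μ ν : Partition') : ℕ := (Prod.fst '' cells μ ν).ncard

/-- The number of columns that `μ/ν` occupies. -/
noncomputable def cols (μ ν : Partition') : ℕ := (Prod.snd '' cells μ ν).ncard

/-- The graph of the symplectic modification rule: `ModRule n μ i τ` holds iff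
`i_{2n}(μ) = i < ∞` and `τ_{2n}(μ) = τ`. -/
inductive ModRule (n : ℕ) : Partition' → ℕ → Partition' → Prop
  | base (μ : Partition') (h : μ.len ≤ n) : ModRule n μ 0 μ
  | step (μ ν τ : Partition') (i : ℕ)
      (hlen : n < μ.len)
      (hbs : IsBorderStrip μ ν)
      (hsize : stripSize μ ν = 2 * (μ.len - n - 1))
      (hbox : (μ.len, 1) ∈ cells μ ν)
      (hrec : ModRule n ν i τ) :
      ModRule n μ (cols μ ν + i) τ

/-- `i_{2n}(μ) ∈ ℕ∞`; it is `⊤ = ∞` exactly when the modification rule fails. -/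
noncomputable def i2 (n : ℕ) (μ : Partition') : ℕ∞ :=
  sInf {c | ∃ i τ, ModRule n μ i τ ∧ c = (i : ℕ∞)}

-- `τ_{2n}(μ)`, defined (arbitrarily, as `μ` itself) when `i_{2n}(μ) = ∞`.
open Classical in
noncomputable def tau (n : ℕ) (μ : Partition') : Partition' :=
  if h : ∃ it : ℕ × Partition', ModRule n μ it.1 it.2 then h.choose.2 else μ

end Partition'

namespace Partition'

lemma bddAbove_support (p : Partition') : BddAbove {i | p.f i ≠ 0} := by
  obtain ⟨N, hN⟩ := p.ev_zero
  exact ⟨N, fun i hi => by by_contra h; exact hi (hN i (le_of_not_ge h))⟩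

lemma f_eq_zero_of_len_lt (p : Partition') {i : ℕ} (h : p.len < i) : p.f i = 0 := by
  by_contra hne
  exact absurd (le_csSup p.bddAbove_support hne) (not_le.mpr h)

lemma one_le_f (p : Partition') {i : ℕ} (h1 : 1 ≤ i) (h2 : i ≤ p.len) : 1 ≤ p.f i := by
  have hne : {i | p.f i ≠ 0}.Nonempty := by
    by_contra h
    have h0 : p.len = 0 := by
      rw [Set.not_nonempty_iff_eq_empty] at h
      simp [len, h]
    omega
  have hmem : p.f p.len ≠ 0 := Nat.sSup_mem hne p.bddAbove_support
  have := p.antitone h1 h2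
  omega

lemma mem_cells {μ ν : Partition'} {i j : ℕ} :
    (i, j) ∈ cells μ ν ↔ 1 ≤ i ∧ ν.f i < j ∧ j ≤ μ.f i := Iff.rfl

lemma cell_row_le_len {μ ν : Partition'} {c : ℕ × ℕ} (hc : c ∈ cells μ ν) : c.1 ≤ μ.len := by
  by_contra h
  have h0 := μ.f_eq_zero_of_len_lt (not_le.mp h)
  obtain ⟨h1, h2, h3⟩ := hc
  omega

lemma adj_fst {x y : ℕ × ℕ} (h : Adj x y) : y.1 ≤ x.1 + 1 ∧ x.1 ≤ y.1 + 1 := by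
  rcases h with ⟨h, _⟩ | ⟨_, h⟩ <;> omega

lemma adj_snd {x y : ℕ × ℕ} (h : Adj x y) : y.2 ≤ x.2 + 1 ∧ x.2 ≤ y.2 + 1 := by
  rcases h with ⟨_, h⟩ | ⟨h, _⟩ <;> omega

lemma chain_ivt {s : Set (ℕ × ℕ)} (g : ℕ × ℕ → ℕ)
    (hg : ∀ x y : ℕ × ℕ, Adj x y → (g y ≤ g x + 1 ∧ g x ≤ g y + 1))
    {a b : ℕ × ℕ} (h : Relation.ReflTransGen (fun x y => x ∈ s ∧ y ∈ s ∧ Adj x y) a b) :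
    b ∈ s → ∀ k : ℕ, ((g a ≤ k ∧ k ≤ g b) ∨ (g b ≤ k ∧ k ≤ g a)) → ∃ c ∈ s, g c = k := by
  induction h with
  | refl => intro ha k hk; exact ⟨a, ha, by omega⟩
  | @tail c d h1 h2 ih =>
      intro _ k hk
      obtain ⟨hcs, hds, hadj⟩ := h2
      have hbd := hg c d hadj
      by_cases hk' : (g a ≤ k ∧ k ≤ g c) ∨ (g c ≤ k ∧ k ≤ g a)
      · exact ih hcs k hk'
      · exact ⟨d, hds, by omega⟩

lemma chain_cross {s : Set (ℕ × ℕ)} (P : ℕ × ℕ → Prop)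
    {a b : ℕ × ℕ} (h : Relation.ReflTransGen (fun x y => x ∈ s ∧ y ∈ s ∧ Adj x y) a b) :
    P a → ¬ P b → ∃ x y, x ∈ s ∧ y ∈ s ∧ Adj x y ∧ P x ∧ ¬ P y := by
  induction h with
  | refl => intro h1 h2; exact absurd h1 h2
  | @tail c d h1 h2 ih =>
      intro ha hd
      by_cases hc : P c
      · exact ⟨c, d, h2.1, h2.2.1, h2.2.2, hc, hd⟩
      · exact ih ha hc

lemma sum_tele (f g : ℕ → ℕ) : ∀ (d r : ℕ), (∀ i, r ≤ i → i < r + d → g i + 1 = f (i + 1)) →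
    g (r + d) = 0 → (∀ i, g i ≤ f i) →
    ∑ i ∈ Finset.Icc r (r + d), (f i - g i) = f r + d := by
  intro d
  induction d with
  | zero =>
      intro r _ h2 _
      rw [Nat.add_zero] at h2 ⊢
      rw [Finset.Icc_self, Finset.sum_singleton]
      omega
  | succ d ih =>
      intro r h1 h2 h3
      have hins : Finset.Icc r (r + (d + 1)) = insert r (Finset.Icc (r + 1) (r + 1 + d)) := by
        ext x; simp only [Finset.mem_Icc, Finset.mem_insert]; omega
      rw [hins, Finset.sum_insert (by simp only [Finset.mem_Icc]; omega)]
      rw [ih (r + 1) (fun i hi1 hi2 => h1 i (by omega) (by omega))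
        (by rw [show r + 1 + d = r + (d + 1) by omega]; exact h2) h3]
      have hk := h1 r le_rfl (by omega)
      have hle := h3 r
      omega

lemma strip_facts (n : ℕ) (μ ν : Partition') (hlen : n < μ.len)
    (hbs : IsBorderStrip μ ν) (hsize : stripSize μ ν = 2 * (μ.len - n - 1))
    (hbox : (μ.len, 1) ∈ cells μ ν) :
    ∃ r, 1 ≤ r ∧ r ≤ μ.len ∧ ν.len < μ.len ∧
      cols μ ν = μ.f r ∧ μ.f r + (μ.len - r) = 2 * (μ.len - n - 1) ∧
      ∀ k, r ≤ k → k ≤ μ.len → ν.f k < μ.f k := by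
  obtain ⟨hsub, hne, hconn, h2x2⟩ := hbs
  set L := μ.len with hLdef
  have hb : 1 ≤ L ∧ ν.f L < 1 ∧ 1 ≤ μ.f L := hbox
  have hνL : ν.f L = 0 := by omega
  have hlenν : ν.len < L := by
    by_contra h
    push_neg at h
    have := ν.one_le_f (show (1:ℕ) ≤ L by omega) h
    omega
  have hRne : (Prod.fst '' cells μ ν).Nonempty := ⟨L, (L, 1), hbox, rfl⟩
  set r := sInf (Prod.fst '' cells μ ν) with hrdef
  obtain ⟨c0, hc0, hc0r⟩ := Nat.sInf_mem hRne
  rw [← hrdef] at hc0r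
  have hr1 : 1 ≤ r := by rw [← hc0r]; exact hc0.1
  have hrL : r ≤ L := Nat.sInf_le ⟨(L, 1), hbox, rfl⟩
  -- every row between r and L is occupied
  have hrow : ∀ k, r ≤ k → k ≤ L → ν.f k < μ.f k := by
    intro k hk1 hk2
    have hchain := hconn c0 hc0 (L, 1) hbox
    obtain ⟨c, hc, hck⟩ := chain_ivt Prod.fst (fun x y h => adj_fst h) hchain
      hbox k (Or.inl ⟨show c0.1 ≤ k by omega, show k ≤ L by omega⟩)
    obtain ⟨_, h2, h3⟩ := hc
    rw [hck] at h2 h3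
    omega
  -- the key border-strip equation: ν_i + 1 = μ_{i+1} on [r, L-1]
  have hkey : ∀ i, r ≤ i → i + 1 ≤ L → ν.f i + 1 = μ.f (i + 1) := by
    intro i hi1 hi2
    have hii : (1:ℕ) ≤ i := by omega
    have hμmono : μ.f (i + 1) ≤ μ.f i := μ.antitone hii (by omega)
    have hνmono : ν.f (i + 1) ≤ ν.f i := ν.antitone hii (by omega)
    have hle : μ.f (i + 1) ≤ ν.f i + 1 := by
      by_contra h
      push_neg at h
      exact h2x2 ⟨i, ν.f i + 1,
        mem_cells.mpr ⟨by omega, by omega, by omega⟩,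
        mem_cells.mpr ⟨by omega, by omega, by omega⟩,
        mem_cells.mpr ⟨by omega, by omega, by omega⟩,
        mem_cells.mpr ⟨by omega, by omega, by omega⟩⟩
    have hge : ν.f i + 1 ≤ μ.f (i + 1) := by
      by_contra h
      push_neg at h
      have hai : (i, μ.f i) ∈ cells μ ν := mem_cells.mpr ⟨hii, hrow i hi1 (by omega), le_rfl⟩
      have hchain := hconn (i, μ.f i) hai (L, 1) hbox
      obtain ⟨x, y, hx, hy, hadj, hPx, hPy⟩ :=
        chain_cross (fun c => c.1 ≤ i) hchain (show i ≤ i from le_rfl) (show ¬ L ≤ i by omega)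
      push_neg at hPy
      have h1 : ν.f i ≤ ν.f x.1 := ν.antitone hx.1 hPx
      have h2 : μ.f y.1 ≤ μ.f (i + 1) := μ.antitone (by omega) (by omega)
      have hx2 := hx.2.1
      have hy2 := hy.2.2
      rcases hadj with ⟨he, _⟩ | ⟨he, _⟩ <;> omega
    omega
  have hrcell : (r, μ.f r) ∈ cells μ ν := mem_cells.mpr ⟨hr1, hrow r le_rfl hrL, le_rfl⟩
  -- cols = μ.f r
  have hcols : cols μ ν = μ.f r := by
    have hCset : Prod.snd '' cells μ ν = Set.Icc 1 (μ.f r) := by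
      ext j
      constructor
      · rintro ⟨c, hc, rfl⟩
        have hcr : r ≤ c.1 := Nat.sInf_le ⟨c, hc, rfl⟩
        have hmono : μ.f c.1 ≤ μ.f r := μ.antitone hr1 hcr
        obtain ⟨_, h2, h3⟩ := hc
        exact ⟨by omega, by omega⟩
      · rintro ⟨hj1, hj2⟩
        have hchain := hconn (L, 1) hbox (r, μ.f r) hrcell
        obtain ⟨c, hc, hcj⟩ := chain_ivt Prod.snd (fun x y h => adj_snd h) hchain
          hrcell j (Or.inl ⟨show 1 ≤ j from hj1, show j ≤ μ.f r from hj2⟩)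
        exact ⟨c, hc, hcj⟩
    rw [cols, hCset, show Set.Icc 1 (μ.f r) = ↑(Finset.Icc 1 (μ.f r)) by simp,
      Set.ncard_coe_finset, Nat.card_Icc]
    omega
  -- size = μ_r + (L - r)
  have hcellsF : cells μ ν =
      ↑((Finset.Icc r L).biUnion fun i => (Finset.Ioc (ν.f i) (μ.f i)).image fun j => (i, j)) := by
    ext ⟨i, j⟩
    simp only [Finset.coe_biUnion, Set.mem_iUnion, Finset.mem_coe, Finset.mem_biUnion,
      Finset.mem_image, Finset.mem_Icc, Finset.mem_Ioc]
    constructor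
    · rintro ⟨h1, h2, h3⟩
      have hri : r ≤ i := Nat.sInf_le ⟨(i, j), ⟨h1, h2, h3⟩, rfl⟩
      have hiL : i ≤ L := cell_row_le_len (μ := μ) (ν := ν) ⟨h1, h2, h3⟩
      exact ⟨i, ⟨hri, hiL⟩, j, ⟨h2, h3⟩, rfl⟩
    · rintro ⟨i', ⟨hi1, hi2⟩, j', ⟨hj1, hj2⟩, heq⟩
      obtain ⟨rfl, rfl⟩ := Prod.mk.injEq .. ▸ heq
      exact ⟨by omega, hj1, hj2⟩
  have hsz : stripSize μ ν = ∑ i ∈ Finset.Icc r L, (μ.f i - ν.f i) := by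
    rw [stripSize, hcellsF, Set.ncard_coe_finset]
    rw [Finset.card_biUnion]
    · apply Finset.sum_congr rfl
      intro i _
      rw [Finset.card_image_of_injective _ (fun a b h => by simpa using h), Nat.card_Ioc]
    · intro i _ i' _ hii
      simp only [Finset.disjoint_left, Finset.mem_image]
      rintro a ⟨j, _, rfl⟩ ⟨j', _, hj'⟩
      exact hii (by simpa using (Prod.mk.injEq .. ▸ hj').1.symm)
  have hsum : ∑ i ∈ Finset.Icc r L, (μ.f i - ν.f i) = μ.f r + (L - r) := by
    have := sum_tele μ.f ν.f (L - r) r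
      (fun i hi1 hi2 => hkey i hi1 (by omega))
      (by rw [show r + (L - r) = L by omega]; exact hνL)
      (fun i => hsub i)
    rw [show r + (L - r) = L by omega] at this
    exact this
  refine ⟨r, hr1, hrL, hlenν, hcols, ?_, hrow⟩
  rw [← hsum, ← hsz]
  exact hsize

end Partition'

open Partition' in
/-- If `μ/ν` and `ν/λ` are successive border strips removed by the
symplectic modification rule, then the number of columns strictly decreases. -/
theorem statement2 (n : ℕ) (μ ν lam : Partition')
    (hμ : n < μ.len) (hν : n < ν.len)
    (hbs1 : IsBorderStrip μ ν)
    (hsize1 : stripSize μ ν = 2 * (μ.len - n - 1))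
    (hbox1 : (μ.len, 1) ∈ cells μ ν)
    (hbs2 : IsBorderStrip ν lam)
    (hsize2 : stripSize ν lam = 2 * (ν.len - n - 1))
    (hbox2 : (ν.len, 1) ∈ cells ν lam) :
    cols ν lam < cols μ ν := by
  obtain ⟨r, hr1, hrL, hlenν, hcols, heq, hrow⟩ := strip_facts n μ ν hμ hbs1 hsize1 hbox1
  obtain ⟨r', hr'1, hr'L, hlenlam, hcols', heq', hrow'⟩ := strip_facts n ν lam hν hbs2 hsize2 hbox2
  rw [hcols, hcols']
  by_cases hc : r ≤ r'
  · have h1 : ν.f r' < μ.f r' := hrow r' hc (by omega)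
    have h2 : μ.f r' ≤ μ.f r := μ.antitone hr1 hc
    omega
  · push_neg at hc
    omega
end

section
/- Let n ≥ 0 and let μ be a partition with ℓ(μ) > n + 1. Suppose ν ⊆ μ is a partition such that μ/ν is a border strip of size 2(ℓ(μ)−n−1) containing the box (ℓ(μ), 1), and let c = c(μ/ν) be the number of columns that μ/ν occupies. Then the transpose partitions satisfy: ν†_i = μ†_{i+1} − 1 for 1 ≤ i < c; ν†_c = 2n + 1 + c − ℓ(μ); and ν†_i = μ†_i for i > c. -/
/-- A partition: a weakly decreasing sequence of nonnegative integers, indexed starting at 1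
(`f 0 = 0` by convention), with finitely many nonzero terms. `f i` is the part `λ_i`. -/
structure SeqPartition where
  f : ℕ → ℕ
  f_zero : f 0 = 0
  antitone : ∀ ⦃i j : ℕ⦄, 1 ≤ i → i ≤ j → f j ≤ f i
  ev_zero : ∃ N, ∀ i, N ≤ i → f i = 0

namespace SeqPartition

/-- The number of nonzero parts `ℓ(λ)`. -/
noncomputable def len (p : SeqPartition) : ℕ := sSup {i | p.f i ≠ 0}

/-- The size `|λ| = Σ_i λ_i`. -/
noncomputable def size (p : SeqPartition) : ℕ := ∑ᶠ i, p.f i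

/-- The transpose (conjugate): `g† j = #{i ≥ 1 : g i ≥ j}`. -/
noncomputable def conjFun (g : ℕ → ℕ) (j : ℕ) : ℕ := Set.ncard {i | 1 ≤ i ∧ j ≤ g i}

/-- Containment of partitions: `ν ⊆ μ`. -/
def Sub (ν μ : SeqPartition) : Prop := ∀ i, ν.f i ≤ μ.f i

/-- The cells (boxes) of the skew diagram `μ/ν`: pairs `(i,j)` with `i ≥ 1` and
`ν_i < j ≤ μ_i`. -/
def cells (μ ν : SeqPartition) : Set (ℕ × ℕ) :=
  {c | 1 ≤ c.1 ∧ ν.f c.1 < c.2 ∧ c.2 ≤ μ.f c.1}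

/-- Two boxes share an edge. -/
def Adj (a b : ℕ × ℕ) : Prop :=
  (a.1 = b.1 ∧ (a.2 + 1 = b.2 ∨ b.2 + 1 = a.2)) ∨
  (a.2 = b.2 ∧ (a.1 + 1 = b.1 ∨ b.1 + 1 = a.1))

/-- A set of boxes is connected if any two of its boxes are joined by a chain of its
boxes, each sharing an edge with the next. -/
def IsConnected (s : Set (ℕ × ℕ)) : Prop :=
  ∀ a ∈ s, ∀ b ∈ s, Relation.ReflTransGen (fun x y => x ∈ s ∧ y ∈ s ∧ Adj x y) a b

/-- `μ/ν` is a border strip: `ν ⊆ μ`, and the skew diagram is nonempty, connected,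
and contains no 2×2 square. -/
def IsBorderStrip (μ ν : SeqPartition) : Prop :=
  Sub ν μ ∧ (cells μ ν).Nonempty ∧ IsConnected (cells μ ν) ∧
    ¬ ∃ i j : ℕ, (i, j) ∈ cells μ ν ∧ (i + 1, j) ∈ cells μ ν ∧
      (i, j + 1) ∈ cells μ ν ∧ (i + 1, j + 1) ∈ cells μ ν

/-- The number of boxes of `μ/ν`. -/
noncomputable def stripSize (μ ν : SeqPartition) : ℕ := (cells μ ν).ncard

/-- The number of rows that `μ/ν` occupies. -/
noncomputable def rows (μ ν : SeqPartition) : ℕ := (Prod.fst '' cells μ ν).ncard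

/-- The number of columns that `μ/ν` occupies. -/
noncomputable def cols (μ ν : SeqPartition) : ℕ := (Prod.snd '' cells μ ν).ncard

/-- The graph of the symplectic modification rule: `ModRule n μ i τ` holds iff
`i_{2n}(μ) = i < ∞` and `τ_{2n}(μ) = τ`. -/
inductive ModRule (n : ℕ) : SeqPartition → ℕ → SeqPartition → Prop
  | base (μ : SeqPartition) (h : μ.len ≤ n) : ModRule n μ 0 μ
  | step (μ ν τ : SeqPartition) (i : ℕ)
      (hlen : n < μ.len)
      (hbs : IsBorderStrip μ ν)
      (hsize : stripSize μ ν = 2 * (μ.len - n - 1))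
      (hbox : (μ.len, 1) ∈ cells μ ν)
      (hrec : ModRule n ν i τ) :
      ModRule n μ (cols μ ν + i) τ

/-- `i_{2n}(μ) ∈ ℕ∞`; it is `⊤ = ∞` exactly when the modification rule fails. -/
noncomputable def i2 (n : ℕ) (μ : SeqPartition) : ℕ∞ :=
  sInf {c | ∃ i τ, ModRule n μ i τ ∧ c = (i : ℕ∞)}

-- `τ_{2n}(μ)`, defined (arbitrarily, as `μ` itself) when `i_{2n}(μ) = ∞`.
open Classical in
noncomputable def tau (n : ℕ) (μ : SeqPartition) : SeqPartition :=
  if h : ∃ it : ℕ × SeqPartition, ModRule n μ it.1 it.2 then h.choose.2 else μ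

end SeqPartition

namespace SeqPartition

/-! ### Auxiliary lemmas -/

lemma f_eq_zero_of_len_lt (p : SeqPartition) {k : ℕ} (hk : p.len < k) : p.f k = 0 := by
  by_contra h
  obtain ⟨N, hN⟩ := p.ev_zero
  have hbdd : BddAbove {i | p.f i ≠ 0} := by
    refine ⟨N, fun i hi => ?_⟩
    by_contra hiN
    exact hi (hN i (le_of_not_ge hiN))
  exact absurd (le_csSup hbdd h) (not_le.mpr hk)

lemma mem_cells {μ ν : SeqPartition} {i j : ℕ} :
    (i, j) ∈ cells μ ν ↔ 1 ≤ i ∧ ν.f i < j ∧ j ≤ μ.f i := Iff.rfl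

lemma conj_spec (g : ℕ → ℕ) (j m : ℕ)
    (hm : ∀ k, 1 ≤ k → k ≤ m → j ≤ g k) (hm' : ∀ k, m < k → g k < j) :
    conjFun g j = m := by
  have hset : {i | 1 ≤ i ∧ j ≤ g i} = Set.Icc 1 m := by
    ext k
    simp only [Set.mem_setOf_eq, Set.mem_Icc]
    constructor
    · rintro ⟨h1, h2⟩
      refine ⟨h1, ?_⟩
      by_contra hkm
      exact absurd h2 (not_le.mpr (hm' k (lt_of_not_ge hkm)))
    · rintro ⟨h1, h2⟩
      exact ⟨h1, hm k h1 h2⟩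
  rw [conjFun, hset, ← Finset.coe_Icc, Set.ncard_coe_finset, Nat.card_Icc]
  omega

lemma conj_char (g : ℕ → ℕ)
    (hanti : ∀ ⦃i j : ℕ⦄, 1 ≤ i → i ≤ j → g j ≤ g i)
    (hev : ∃ N, ∀ i, N ≤ i → g i = 0) (j : ℕ) (hj : 1 ≤ j) :
    (∀ k, 1 ≤ k → k ≤ conjFun g j → j ≤ g k) ∧ (∀ k, conjFun g j < k → g k < j) := by
  obtain ⟨N, hN⟩ := hev
  by_cases hne : ∃ k, k ∈ {i | 1 ≤ i ∧ j ≤ g i}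
  · have hbdd : BddAbove {i | 1 ≤ i ∧ j ≤ g i} := by
      refine ⟨N, fun i hi => ?_⟩
      by_contra hiN
      have h0 := hN i (le_of_not_ge hiN)
      have := hi.2
      omega
    set m := sSup {i | 1 ≤ i ∧ j ≤ g i} with hmdef
    have hmem : m ∈ {i | 1 ≤ i ∧ j ≤ g i} := Nat.sSup_mem hne hbdd
    have hm : ∀ k, 1 ≤ k → k ≤ m → j ≤ g k :=
      fun k h1 h2 => le_trans hmem.2 (hanti h1 h2)
    have hm' : ∀ k, m < k → g k < j := by
      intro k hk
      by_contra h
      push_neg at h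
      have hkm : k ≤ m := le_csSup hbdd ⟨by omega, h⟩
      omega
    rw [conj_spec g j m hm hm']
    exact ⟨hm, hm'⟩
  · push_neg at hne
    have hm' : ∀ k, 0 < k → g k < j := by
      intro k hk
      by_contra h
      push_neg at h
      exact (hne k) ⟨hk, h⟩
    rw [conj_spec g j 0 (fun k h1 h2 => by omega) hm']
    exact ⟨fun k h1 h2 => by omega, hm'⟩

lemma rows_of_path {s : Set (ℕ × ℕ)} {p q : ℕ × ℕ}
    (h : Relation.ReflTransGen (fun x y => x ∈ s ∧ y ∈ s ∧ Adj x y) p q)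
    (hp : p ∈ s) :
    ∀ k, ((p.1 ≤ k ∧ k ≤ q.1) ∨ (q.1 ≤ k ∧ k ≤ p.1)) → ∃ j, (k, j) ∈ s := by
  induction h with
  | refl =>
    intro k hk
    have hk' : k = p.1 := by omega
    subst hk'
    exact ⟨p.2, hp⟩
  | @tail b c hpb step ih =>
    intro k hk
    obtain ⟨hb, hcc, hadj⟩ := step
    have hrow : b.1 = c.1 ∨ b.1 + 1 = c.1 ∨ c.1 + 1 = b.1 := by
      rcases hadj with ⟨h1, _⟩ | ⟨_, h2⟩
      · exact Or.inl h1
      · exact Or.inr h2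
    by_cases hkc : k = c.1
    · subst hkc
      exact ⟨c.2, hcc⟩
    · exact ih k (by omega)

lemma crossing {s : Set (ℕ × ℕ)} {p q : ℕ × ℕ} (k : ℕ)
    (h : Relation.ReflTransGen (fun x y => x ∈ s ∧ y ∈ s ∧ Adj x y) p q)
    (hp : k + 1 ≤ p.1) :
    q.1 ≤ k → ∃ x, x ∈ s ∧ ∃ y, y ∈ s ∧ x.1 = k + 1 ∧ y.1 = k ∧ x.2 = y.2 := by
  induction h with
  | refl => intro hq; omega
  | @tail b c hpb step ih =>
    intro hq
    obtain ⟨hb, hcc, hadj⟩ := step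
    by_cases hbk : b.1 ≤ k
    · exact ih hbk
    · rcases hadj with ⟨h1, _⟩ | ⟨hcol, hrows⟩
      · omega
      · refine ⟨b, hb, c, hcc, by omega, by omega, hcol⟩

end SeqPartition

open SeqPartition in
/-- Effect of removing the border strip of the symplectic modification
rule on the transpose partition. -/
theorem statement3 (n : ℕ) (μ ν : SeqPartition) (c : ℕ)
    (hμ : n + 1 < μ.len)
    (hsub : Sub ν μ)
    (hbs : IsBorderStrip μ ν)
    (hsize : stripSize μ ν = 2 * (μ.len - n - 1))
    (hbox : (μ.len, 1) ∈ cells μ ν)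
    (hc : c = cols μ ν) :
    (∀ i : ℕ, 1 ≤ i → i < c → (conjFun ν.f i : ℤ) = (conjFun μ.f (i + 1) : ℤ) - 1) ∧
    (conjFun ν.f c : ℤ) = 2 * n + 1 + c - μ.len ∧
    (∀ i : ℕ, c < i → conjFun ν.f i = conjFun μ.f i) := by
  classical
  obtain ⟨hsub', hne, hconn, h22⟩ := hbs
  set ℓ := μ.len with hℓdef
  obtain ⟨hℓ1, hb2, hμℓ⟩ := mem_cells.mp hbox
  have hνℓ : ν.f ℓ = 0 := by omega
  have hμ0 : ∀ k, ℓ < k → μ.f k = 0 := fun k hk => μ.f_eq_zero_of_len_lt hk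
  have hν0 : ∀ k, ℓ ≤ k → ν.f k = 0 := by
    intro k hk
    rcases eq_or_lt_of_le hk with h | h
    · rw [← h]; exact hνℓ
    · have h1 := hsub k
      have h2 := hμ0 k h
      omega
  have hbox' : (ℓ, 1) ∈ cells μ ν := mem_cells.mpr ⟨hℓ1, hb2, hμℓ⟩
  -- occupied rows lie in [1, ℓ]
  have hrow_le : ∀ i j, (i, j) ∈ cells μ ν → 1 ≤ i ∧ i ≤ ℓ := by
    intro i j hij
    obtain ⟨h1, h2, h3⟩ := mem_cells.mp hij
    refine ⟨h1, ?_⟩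
    by_contra h
    have := hμ0 i (by omega)
    omega
  set a := sInf {i | ∃ j, (i, j) ∈ cells μ ν} with hadef
  have hane : {i | ∃ j, (i, j) ∈ cells μ ν}.Nonempty := ⟨ℓ, 1, hbox'⟩
  obtain ⟨ja, haj⟩ : ∃ j, (a, j) ∈ cells μ ν := Nat.sInf_mem hane
  have ha1 : 1 ≤ a := (hrow_le a ja haj).1
  have haℓ : a ≤ ℓ := (hrow_le a ja haj).2
  have ha_min : ∀ i j, (i, j) ∈ cells μ ν → a ≤ i := fun i j hij => Nat.sInf_le ⟨j, hij⟩
  -- every row in [a, ℓ] is occupied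
  have hocc : ∀ k, a ≤ k → k ≤ ℓ → ∃ j, (k, j) ∈ cells μ ν := by
    intro k h1 h2
    have hpath := hconn (a, ja) haj (ℓ, 1) hbox'
    exact rows_of_path hpath haj k (Or.inl ⟨h1, h2⟩)
  -- unoccupied rows: ν = μ
  have hunocc : ∀ k, 1 ≤ k → (k < a ∨ ℓ < k) → ν.f k = μ.f k := by
    intro k hk1 hk
    have hle := hsub k
    rcases eq_or_lt_of_le hle with h | h
    · exact h
    · exfalso
      have hcell : (k, ν.f k + 1) ∈ cells μ ν := mem_cells.mpr ⟨hk1, by omega, by omega⟩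
      rcases hk with hk | hk
      · exact absurd (ha_min k _ hcell) (by omega)
      · exact absurd ((hrow_le k _ hcell).2) (by omega)
  -- the border-strip step relation
  have hstep : ∀ k, a ≤ k → k < ℓ → ν.f k + 1 = μ.f (k + 1) := by
    intro k hka hkℓ
    obtain ⟨jk, hjk⟩ := hocc k hka (by omega)
    obtain ⟨jk1, hjk1⟩ := hocc (k + 1) (by omega) (by omega)
    have hpath := hconn (k + 1, jk1) hjk1 (k, jk) hjk
    obtain ⟨x, hx, y, hy, hx1, hy1, hxy⟩ :=
      crossing (s := cells μ ν) k hpath (le_refl (k + 1)) (le_refl k)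
    obtain ⟨_, hx2, hx3⟩ := hx
    obtain ⟨_, hy2, hy3⟩ := hy
    rw [hx1] at hx2 hx3
    rw [hy1] at hy2 hy3
    -- ν.f k < x.2 = y.2 ≤ μ.f (k+1)
    have hlt : ν.f k < μ.f (k + 1) := by omega
    have hμμ : μ.f (k + 1) ≤ μ.f k := μ.antitone (by omega) (by omega)
    have hνν : ν.f (k + 1) ≤ ν.f k := ν.antitone (by omega) (by omega)
    by_contra hne2
    have h4 : ν.f k + 2 ≤ μ.f (k + 1) := by omega
    exact h22 ⟨k, ν.f k + 1,
      mem_cells.mpr ⟨by omega, by omega, by omega⟩, mem_cells.mpr ⟨by omega, by omega, by omega⟩,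
      mem_cells.mpr ⟨by omega, by omega, by omega⟩, mem_cells.mpr ⟨by omega, by omega, by omega⟩⟩
  set cval := μ.f a with hcvaldef
  have hcval1 : 1 ≤ cval := le_trans hμℓ (μ.antitone ha1 haℓ)
  -- columns
  have hcols : cols μ ν = cval := by
    have himg : Prod.snd '' cells μ ν = Set.Icc 1 cval := by
      ext j
      simp only [Set.mem_image, Set.mem_Icc]
      constructor
      · rintro ⟨⟨i, j'⟩, hcell, rfl⟩
        have hia : a ≤ i := ha_min i j' hcell
        obtain ⟨h1, h2, h3⟩ := mem_cells.mp hcell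
        have := μ.antitone ha1 hia
        exact ⟨by omega, by omega⟩
      · rintro ⟨hj1, hj2⟩
        have hbddT : BddAbove {i | a ≤ i ∧ i ≤ ℓ ∧ j ≤ μ.f i} :=
          ⟨ℓ, fun x hx => hx.2.1⟩
        have hneT : {i | a ≤ i ∧ i ≤ ℓ ∧ j ≤ μ.f i}.Nonempty := ⟨a, le_refl a, haℓ, hj2⟩
        obtain ⟨hia, hiℓ, hij⟩ := Nat.sSup_mem hneT hbddT
        set i := sSup {i | a ≤ i ∧ i ≤ ℓ ∧ j ≤ μ.f i} with hidef
        refine ⟨(i, j), mem_cells.mpr ⟨by omega, ?_, hij⟩, rfl⟩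
        rcases eq_or_lt_of_le hiℓ with h | hltℓ
        · rw [h]; omega
        · have h1 := hstep i hia hltℓ
          have hi1 : μ.f (i + 1) < j := by
            by_contra hge
            push_neg at hge
            have : i + 1 ≤ i := le_csSup hbddT ⟨by omega, by omega, hge⟩
            omega
          omega
    rw [cols, himg, ← Finset.coe_Icc, Set.ncard_coe_finset, Nat.card_Icc]
    omega
  -- strip size
  have hcells_eq : cells μ ν =
      ↑((Finset.Icc a ℓ).biUnion fun i => (Finset.Ioc (ν.f i) (μ.f i)).image fun j => (i, j)) := by
    ext ⟨i, j⟩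
    simp only [Finset.coe_biUnion, Finset.mem_coe, Set.mem_iUnion, Finset.mem_biUnion,
      Finset.mem_Icc, Finset.mem_image, Finset.mem_Ioc]
    constructor
    · intro h
      obtain ⟨h1, h2, h3⟩ := mem_cells.mp h
      exact ⟨i, ⟨ha_min i j h, (hrow_le i j h).2⟩, j, ⟨h2, h3⟩, rfl⟩
    · rintro ⟨i', ⟨hi1, hi2⟩, j', ⟨hj1, hj2⟩, heq⟩
      injection heq with e1 e2
      subst e1; subst e2
      exact mem_cells.mpr ⟨by omega, hj1, hj2⟩
  have hcard : ((Finset.Icc a ℓ).biUnion fun i =>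
      (Finset.Ioc (ν.f i) (μ.f i)).image fun j => (i, j)).card
      = ∑ i ∈ Finset.Icc a ℓ, (μ.f i - ν.f i) := by
    rw [Finset.card_biUnion]
    · refine Finset.sum_congr rfl fun i _ => ?_
      rw [Finset.card_image_of_injective _ (fun x y h => by simpa using h), Nat.card_Ioc]
    · intro x hx y hy hxy
      simp only [Finset.disjoint_left, Finset.mem_image, Finset.mem_Ioc]
      rintro p ⟨j1, hj1, rfl⟩ ⟨j2, hj2, heq⟩
      injection heq with e1 e2
      exact hxy e1.symm
  have hsum : ∀ d k, a ≤ k → k + d = ℓ →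
      (∑ i ∈ Finset.Icc k ℓ, (μ.f i - ν.f i)) = μ.f k + d := by
    intro d
    induction d with
    | zero =>
      intro k hk hkℓ
      have hkk : k = ℓ := by omega
      rw [hkk, Finset.Icc_self, Finset.sum_singleton]
      omega
    | succ d ih =>
      intro k hk hkℓ
      have hkℓ' : k < ℓ := by omega
      have hicc : Finset.Icc k ℓ = insert k (Finset.Icc (k + 1) ℓ) := by
        ext x
        simp only [Finset.mem_Icc, Finset.mem_insert]
        omega
      have hknot : k ∉ Finset.Icc (k + 1) ℓ := by
        simp only [Finset.mem_Icc]; omega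
      rw [hicc, Finset.sum_insert hknot, ih (k + 1) (by omega) (by omega)]
      have h1 := hstep k hk hkℓ'
      have h2 : μ.f (k + 1) ≤ μ.f k := μ.antitone (by omega) (by omega)
      omega
  have hsize' : stripSize μ ν = cval + (ℓ - a) := by
    rw [stripSize, hcells_eq, Set.ncard_coe_finset, hcard,
      hsum (ℓ - a) a (le_refl a) (by omega)]
  have hkey : cval + (ℓ - a) = 2 * (ℓ - n - 1) := by rw [← hsize', hsize]
  have hc' : c = cval := by rw [hc, hcols]
  refine ⟨?_, ?_, ?_⟩
  · -- 1 ≤ j < c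
    intro j hj1 hjc
    rw [hc'] at hjc
    obtain ⟨hM1, hM2⟩ := conj_char μ.f μ.antitone μ.ev_zero (j + 1) (by omega)
    set M := conjFun μ.f (j + 1) with hMdef
    have hMa : a ≤ M := by
      by_contra h
      have := hM2 a (by omega)
      omega
    have hMℓ : M ≤ ℓ := by
      by_contra h
      have h1 := hM1 (ℓ + 1) (by omega) (by omega)
      have h2 := hμ0 (ℓ + 1) (by omega)
      omega
    have hval : conjFun ν.f j = M - 1 := by
      apply conj_spec
      · intro k hk1 hk2
        by_cases hka : k < a
        · rw [hunocc k hk1 (by omega)]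
          have : cval ≤ μ.f k := μ.antitone hk1 (by omega)
          omega
        · have hkℓ : k < ℓ := by omega
          have h1 := hstep k (by omega) hkℓ
          have h2 := hM1 (k + 1) (by omega) (by omega)
          omega
      · intro k hk
        by_cases hkℓ : ℓ ≤ k
        · have := hν0 k hkℓ; omega
        · have h1 := hstep k (by omega) (by omega)
          have h2 := hM2 (k + 1) (by omega)
          omega
    rw [hval]
    omega
  · -- j = c
    rw [hc']
    have hval : conjFun ν.f cval = a - 1 := by
      apply conj_spec
      · intro k hk1 hk2
        rw [hunocc k hk1 (by omega)]
        exact μ.antitone hk1 (by omega)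
      · intro k hk
        by_cases hkℓ : ℓ ≤ k
        · have := hν0 k hkℓ; omega
        · have h1 := hstep k (by omega) (by omega)
          have h2 : μ.f (k + 1) ≤ cval := μ.antitone ha1 (by omega)
          omega
    rw [hval]
    omega
  · -- i > c
    intro i hi
    rw [hc'] at hi
    have hsets : {k | 1 ≤ k ∧ i ≤ ν.f k} = {k | 1 ≤ k ∧ i ≤ μ.f k} := by
      ext k
      simp only [Set.mem_setOf_eq]
      constructor
      · rintro ⟨h1, h2⟩
        exact ⟨h1, le_trans h2 (hsub k)⟩
      · rintro ⟨h1, h2⟩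
        refine ⟨h1, ?_⟩
        by_cases hk : a ≤ k ∧ k ≤ ℓ
        · exfalso
          have : μ.f k ≤ cval := μ.antitone ha1 hk.1
          omega
        · rw [hunocc k h1 (by omega)]
          exact h2
    rw [conjFun, conjFun, hsets]
end

section
/- Let n, k ≥ 0. The number of partitions μ with μ₁ ≤ k and i_{2n}(μ) < ∞ is exactly 2^k · binomial(n+k, k). -/
namespace YPartition

theorem ext' {μ ν : YPartition} (h : μ.f = ν.f) : μ = ν := by
  cases μ; cases ν; simpa using h

lemma len_le {μ : YPartition} {N : ℕ} (h : ∀ i, N < i → μ.f i = 0) : μ.len ≤ N := by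
  apply csSup_le'
  intro i hi
  by_contra hc
  exact hi (h i (not_le.mp hc))

lemma f_le_len {μ : YPartition} {i : ℕ} (h : μ.f i ≠ 0) : i ≤ μ.len := by
  obtain ⟨N, hN⟩ := μ.ev_zero
  apply le_csSup ⟨N, ?_⟩ h
  intro j hj
  by_contra hc
  exact hj (hN j (le_of_lt (not_le.mp hc)))

lemma f_len_ne {μ : YPartition} (h : 1 ≤ μ.len) : μ.f μ.len ≠ 0 := by
  obtain ⟨N, hN⟩ := μ.ev_zero
  have hne : {i | μ.f i ≠ 0}.Nonempty := by
    by_contra hc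
    rw [Set.not_nonempty_iff_eq_empty] at hc
    have : μ.len = 0 := by
      simp [YPartition.len, hc]
    omega
  have hbdd : BddAbove {i | μ.f i ≠ 0} := by
    refine ⟨N, fun j hj => ?_⟩
    by_contra hc
    exact hj (hN j (le_of_lt (not_le.mp hc)))
  exact Nat.sSup_mem hne hbdd

lemma one_le_f {μ : YPartition} {i : ℕ} (h1 : 1 ≤ i) (h2 : i ≤ μ.len) : 1 ≤ μ.f i := by
  have := f_len_ne (le_trans h1 h2)
  have := μ.antitone h1 h2
  omega

lemma f_eq_zero {μ : YPartition} {i : ℕ} (h : μ.len < i) : μ.f i = 0 := by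
  by_contra hc
  exact absurd (f_le_len hc) (by omega)

/-- The β-set of a partition: `{μ_i - i : i ≥ 1}`. -/
def Bset (μ : YPartition) : Set ℤ := {x | ∃ i : ℕ, 1 ≤ i ∧ (μ.f i : ℤ) - i = x}

/-- The finiteness condition for the symplectic modification rule. -/
def Good (n : ℕ) (μ : YPartition) : Prop :=
  ∀ a : ℕ, ((a : ℤ) - n - 1) ∈ Bset μ ∨ (-(a : ℤ) - n - 1) ∈ Bset μ

lemma Bset_le {μ : YPartition} {x : ℤ} (h : x ∈ Bset μ) : x ≤ (μ.f 1 : ℤ) - 1 := by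
  obtain ⟨i, hi, rfl⟩ := h
  have := μ.antitone le_rfl hi
  omega

lemma neg_len_not_mem {μ : YPartition} (h : 1 ≤ μ.len) : -(μ.len : ℤ) ∉ Bset μ := by
  rintro ⟨i, hi, hx⟩
  rcases le_or_gt i μ.len with hc | hc
  · have := one_le_f hi hc
    omega
  · have := f_eq_zero hc
    omega

lemma neg_mem_Bset {μ : YPartition} {i : ℕ} (h : μ.len < i) : -(i : ℤ) ∈ Bset μ := by
  exact ⟨i, by omega, by rw [f_eq_zero h]; simp⟩

/-! ### The finite model -/

/-- The involution pairing `x ↦ -2n-2-x`. -/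
def sigm (n : ℕ) (x : ℤ) : ℤ := -2*(n:ℤ)-2-x

/-- The larger element of the pair `{x, sigm n x}`. -/
def phim (n : ℕ) (x : ℤ) : ℤ := max x (sigm n x)

lemma sigm_def (n : ℕ) (x : ℤ) : sigm n x = -2*(n:ℤ)-2-x := rfl

lemma sigm_sigm (n : ℕ) (x : ℤ) : sigm n (sigm n x) = x := by simp [sigm]

lemma phim_eq_left {n : ℕ} {x : ℤ} (h : -(n:ℤ)-1 ≤ x) : phim n x = x :=
  max_eq_left (by rw [sigm_def]; omega)

lemma phim_eq_right {n : ℕ} {x : ℤ} (h : x ≤ -(n:ℤ)-1) : phim n x = sigm n x :=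
  max_eq_right (by rw [sigm_def]; omega)

lemma phim_choice (n : ℕ) (x : ℤ) : phim n x = x ∨ phim n x = sigm n x := max_choice _ _

lemma phim_ge (n : ℕ) (x : ℤ) : -(n:ℤ)-1 ≤ phim n x := by
  rcases le_or_gt (-(n:ℤ)-1) x with h | h
  · exact le_trans h (le_max_left _ _)
  · refine le_trans ?_ (le_max_right _ _)
    rw [sigm_def]; omega

/-- The interval `[-(2n+k+1), k-1]` in `ℤ`. -/
noncomputable def modelIcc (n k : ℕ) : Finset ℤ := Finset.Icc (-(2*(n:ℤ)+k+1)) ((k:ℤ)-1)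

/-- The model set: `k`-subsets of the interval avoiding the pairing `x ↦ -2n-2-x`. -/
noncomputable def Amodel (n k : ℕ) : Finset (Finset ℤ) :=
  (modelIcc n k).powerset.filter (fun F => F.card = k ∧ ∀ x ∈ F, sigm n x ∉ F)

lemma Amodel_card (n k : ℕ) : (Amodel n k).card = 2 ^ k * Nat.choose (n + k) k := by
  classical
  have hT0card : (Finset.Icc (-(n:ℤ)) ((k:ℤ)-1)).card = n + k := by
    rw [Int.card_Icc]; omega
  have hmem : ∀ F ∈ Amodel n k,
      F.image (phim n) ∈ Finset.powersetCard k (Finset.Icc (-(n:ℤ)) ((k:ℤ)-1)) := by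
    intro F hF
    rw [Amodel, Finset.mem_filter, Finset.mem_powerset] at hF
    obtain ⟨hsub, hcard, hpf⟩ := hF
    have hne : ∀ x ∈ F, x ≠ -(n:ℤ)-1 := by
      intro x hx hc
      refine hpf x hx ?_
      have : sigm n x = x := by rw [sigm_def]; omega
      rwa [this]
    rw [Finset.mem_powersetCard]
    constructor
    · intro y hy
      rw [Finset.mem_image] at hy
      obtain ⟨x, hx, rfl⟩ := hy
      have hxI := hsub hx
      rw [modelIcc, Finset.mem_Icc] at hxI
      have hxne := hne x hx
      rw [Finset.mem_Icc]
      refine ⟨?_, ?_⟩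
      · have := phim_ge n x
        rcases phim_choice n x with h | h <;> rw [h]
        · rw [h] at this; omega
        · rw [h] at this; rw [sigm_def] at this ⊢; omega
      · rcases phim_choice n x with h | h <;> rw [h]
        · omega
        · rw [sigm_def]; omega
    · rw [Finset.card_image_of_injOn, hcard]
      intro x hx y hy hxy
      rcases phim_choice n x with h1 | h1 <;> rcases phim_choice n y with h2 | h2 <;>
        rw [h1, h2] at hxy
      · exact hxy
      · exact absurd hx (by rw [hxy]; have := hpf y hy; simpa using this)
      · exact absurd hy (by rw [← hxy]; have := hpf x hx; simpa using this)
      · simp only [sigm_def] at hxy; omega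
  rw [Finset.card_eq_sum_card_fiberwise hmem]
  have hfiber : ∀ T ∈ Finset.powersetCard k (Finset.Icc (-(n:ℤ)) ((k:ℤ)-1)),
      ((Amodel n k).filter (fun F => F.image (phim n) = T)).card = 2 ^ k := by
    intro T hT
    rw [Finset.mem_powersetCard] at hT
    obtain ⟨hTsub, hTcard⟩ := hT
    have hTlo : ∀ r ∈ T, -(n:ℤ) ≤ r ∧ r ≤ (k:ℤ)-1 := by
      intro r hr
      have := hTsub hr
      rwa [Finset.mem_Icc] at this
    have key : ((Amodel n k).filter (fun F => F.image (phim n) = T)).card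
        = T.powerset.card := by
      apply Finset.card_bij' (fun F _ => T.filter (fun r => r ∉ F))
        (fun E _ => (T \ E) ∪ E.image (sigm n))
      · intro F _
        exact Finset.mem_powerset.mpr (Finset.filter_subset _ _)
      · -- reverse maps into fiber
        intro E hE
        rw [Finset.mem_powerset] at hE
        have hdisj : Disjoint (T \ E) (E.image (sigm n)) := by
          rw [Finset.disjoint_left]
          intro a ha hb
          rw [Finset.mem_image] at hb
          obtain ⟨r, hr, rfl⟩ := hb
          have h1 := hTlo _ (Finset.mem_sdiff.mp ha).1
          have h2 := hTlo _ (hE hr)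
          rw [sigm_def] at h1
          omega
        have hσinj : Set.InjOn (sigm n) E := by
          intro a _ b _ hab
          rw [sigm_def, sigm_def] at hab
          omega
        rw [Finset.mem_filter]
        refine ⟨?_, ?_⟩
        · rw [Amodel, Finset.mem_filter, Finset.mem_powerset]
          refine ⟨?_, ?_, ?_⟩
          · intro x hx
            rw [Finset.mem_union] at hx
            rw [modelIcc, Finset.mem_Icc]
            rcases hx with hx | hx
            · have := hTlo _ (Finset.mem_sdiff.mp hx).1
              omega
            · rw [Finset.mem_image] at hx
              obtain ⟨r, hr, rfl⟩ := hx
              have := hTlo _ (hE hr)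
              rw [sigm_def]
              omega
          · rw [Finset.card_union_of_disjoint hdisj, Finset.card_image_of_injOn hσinj,
              Finset.card_sdiff_of_subset hE, ← hTcard]
            have := Finset.card_le_card hE
            omega
          · intro x hx hc
            rw [Finset.mem_union] at hx hc
            rcases hx with hx | hx <;> rcases hc with hc | hc
            · have h1 := hTlo _ (Finset.mem_sdiff.mp hx).1
              have h2 := hTlo _ (Finset.mem_sdiff.mp hc).1
              rw [sigm_def] at hc h2
              omega
            · rw [Finset.mem_image] at hc
              obtain ⟨r, hr, hrr⟩ := hc
              have : x = r := by rw [sigm_def, sigm_def] at hrr; omega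
              subst this
              exact (Finset.mem_sdiff.mp hx).2 hr
            · rw [Finset.mem_image] at hx
              obtain ⟨r, hr, rfl⟩ := hx
              rw [sigm_sigm] at hc
              exact (Finset.mem_sdiff.mp hc).2 hr
            · rw [Finset.mem_image] at hx
              obtain ⟨r, hr, rfl⟩ := hx
              rw [sigm_sigm] at hc
              rw [Finset.mem_image] at hc
              obtain ⟨s, hs, hss⟩ := hc
              have h1 := hTlo _ (hE hr)
              have h2 := hTlo _ (hE hs)
              rw [sigm_def] at hss
              omega
        · -- image phim = T
          ext y
          rw [Finset.mem_image]
          constructor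
          · rintro ⟨x, hx, rfl⟩
            rw [Finset.mem_union] at hx
            rcases hx with hx | hx
            · have h1 := hTlo _ (Finset.mem_sdiff.mp hx).1
              rw [phim_eq_left (by omega)]
              exact (Finset.mem_sdiff.mp hx).1
            · rw [Finset.mem_image] at hx
              obtain ⟨r, hr, rfl⟩ := hx
              have h1 := hTlo _ (hE hr)
              rw [phim_eq_right (by rw [sigm_def]; omega), sigm_sigm]
              exact hE hr
          · intro hy
            have h1 := hTlo _ hy
            by_cases hyE : y ∈ E
            · refine ⟨sigm n y, Finset.mem_union_right _ (Finset.mem_image_of_mem _ hyE), ?_⟩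
              rw [phim_eq_right (by rw [sigm_def]; omega), sigm_sigm]
            · refine ⟨y, Finset.mem_union_left _ (Finset.mem_sdiff.mpr ⟨hy, hyE⟩), ?_⟩
              rw [phim_eq_left (by omega)]
      · -- left inverse : psi (inv F) = F
        intro F hF
        rw [Finset.mem_filter] at hF
        obtain ⟨hFA, hFim⟩ := hF
        rw [Amodel, Finset.mem_filter, Finset.mem_powerset] at hFA
        obtain ⟨hsub, hcard, hpf⟩ := hFA
        ext x
        simp only [Finset.mem_union, Finset.mem_sdiff, Finset.mem_filter, Finset.mem_image,
          not_and, not_not]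
        constructor
        · rintro (⟨hxT, hxF⟩ | ⟨r, ⟨hrT, hrF⟩, rfl⟩)
          · exact hxF hxT
          · have hex : ∃ y ∈ F, phim n y = r := by
              rw [← hFim] at hrT
              rw [Finset.mem_image] at hrT
              exact hrT
            obtain ⟨y, hyF, hyr⟩ := hex
            rcases phim_choice n y with h1 | h1 <;> rw [h1] at hyr
            · exact absurd (hyr ▸ hyF) (fun h => (hrF h).elim)
            · have : sigm n r = y := by rw [← hyr, sigm_sigm]
              rwa [this]
        · intro hxF
          have hxT : phim n x ∈ T := by
            rw [← hFim]; exact Finset.mem_image_of_mem _ hxF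
          rcases phim_choice n x with h1 | h1
          · left
            rw [h1] at hxT
            exact ⟨hxT, fun _ => hxF⟩
          · right
            refine ⟨sigm n x, ⟨?_, ?_⟩, by rw [sigm_sigm]⟩
            · rwa [h1] at hxT
            · exact hpf x hxF
      · -- right inverse : inv (psi E) = E
        intro E hE
        rw [Finset.mem_powerset] at hE
        ext r
        simp only [Finset.mem_filter, Finset.mem_union, Finset.mem_sdiff, Finset.mem_image,
          not_or, not_and, not_not, not_exists]
        constructor
        · rintro ⟨hrT, h1, _⟩
          exact h1 hrT
        · intro hrE
          have hrT := hE hrE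
          have hb := hTlo _ hrT
          refine ⟨hrT, fun _ => hrE, ?_⟩
          intro s hs hc
          have := hTlo _ (hE hs)
          rw [sigm_def] at hc
          omega
    rw [key, Finset.card_powerset, hTcard]
  rw [Finset.sum_congr rfl hfiber, Finset.sum_const, Finset.card_powersetCard, hT0card,
    smul_eq_mul, mul_comm]

/-! ### From partitions to the model and back -/

open Classical in
/-- The complement data of a partition inside the model interval. -/
noncomputable def Eset (n k : ℕ) (μ : YPartition) : Finset ℤ :=
  (modelIcc n k).filter (fun x => x ∉ Bset μ)

lemma f_sub_strictAnti (μ : YPartition) {i j : ℕ} (h1 : 1 ≤ i) (h2 : i < j) :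
    (μ.f j : ℤ) - j < (μ.f i : ℤ) - i := by
  have := μ.antitone h1 (le_of_lt h2)
  omega

lemma len_le_M {n k : ℕ} {μ : YPartition} (h1 : μ.f 1 ≤ k) (hg : Good n μ) :
    μ.len ≤ 2*n+k+1 := by
  by_contra hc
  push_neg at hc
  have hlen1 : 1 ≤ μ.len := by omega
  rcases hg (μ.len - n - 1) with h | h
  · obtain ⟨i, hi, hx⟩ := h
    have hb := Bset_le ⟨i, hi, hx⟩
    have : (μ.f 1 : ℤ) ≤ k := by exact_mod_cast h1
    omega
  · have : (-(↑(μ.len - n - 1) : ℤ) - n - 1) = -(μ.len : ℤ) := by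
      push_cast [Nat.cast_sub (by omega : n + 1 ≤ μ.len)]
      ring_nf
      omega
    rw [this] at h
    exact neg_len_not_mem hlen1 h

open Classical in
lemma Bset_filter_eq {n k : ℕ} {μ : YPartition} (h1 : μ.f 1 ≤ k) (hl : μ.len ≤ 2*n+k+1) :
    (modelIcc n k).filter (fun x => x ∈ Bset μ)
      = (Finset.Icc 1 (2*n+k+1)).image (fun i : ℕ => (μ.f i : ℤ) - i) := by
  classical
  ext x
  rw [Finset.mem_filter, Finset.mem_image]
  constructor
  · rintro ⟨hxI, i, hi, rfl⟩
    refine ⟨i, ?_, rfl⟩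
    rw [Finset.mem_Icc]
    refine ⟨hi, ?_⟩
    by_contra hc
    push_neg at hc
    have : μ.f i = 0 := f_eq_zero (by omega)
    rw [modelIcc, Finset.mem_Icc] at hxI
    rw [this] at hxI
    push_cast at hxI
    omega
  · rintro ⟨i, hi, rfl⟩
    rw [Finset.mem_Icc] at hi
    have hf1 : μ.f i ≤ k := le_trans (μ.antitone le_rfl hi.1) h1
    refine ⟨?_, i, hi.1, rfl⟩
    rw [modelIcc, Finset.mem_Icc]
    constructor
    · have : (0:ℤ) ≤ μ.f i := by positivity
      have : (i:ℤ) ≤ 2*n+k+1 := by exact_mod_cast hi.2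
      omega
    · have : (μ.f i : ℤ) ≤ k := by exact_mod_cast hf1
      have : (1:ℤ) ≤ i := by exact_mod_cast hi.1
      omega

lemma modelIcc_card (n k : ℕ) : (modelIcc n k).card = (2*n+k+1) + k := by
  rw [modelIcc, Int.card_Icc]
  omega

lemma Eset_card {n k : ℕ} {μ : YPartition} (h1 : μ.f 1 ≤ k) (hg : Good n μ) :
    (Eset n k μ).card = k := by
  classical
  have hl := len_le_M h1 hg
  have himg : ((Finset.Icc 1 (2*n+k+1)).image (fun i : ℕ => (μ.f i : ℤ) - i)).card
      = 2*n+k+1 := by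
    rw [Finset.card_image_of_injOn, Nat.card_Icc]
    · omega
    · intro a ha b hb hab
      rw [Finset.mem_coe, Finset.mem_Icc] at ha hb
      by_contra hne
      simp only at hab
      rcases Nat.lt_or_ge a b with h | h
      · have := f_sub_strictAnti μ ha.1 h; omega
      · have hlt : b < a := by omega
        have := f_sub_strictAnti μ hb.1 hlt; omega
  have hsplit := Finset.card_filter_add_card_filter_not
    (s := modelIcc n k) (p := fun x => x ∈ Bset μ)
  rw [Bset_filter_eq h1 hl, himg] at hsplit
  have := modelIcc_card n k
  rw [Eset]
  omega

lemma Eset_mem_Amodel {n k : ℕ} {μ : YPartition} (h1 : μ.f 1 ≤ k) (hg : Good n μ) :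
    Eset n k μ ∈ Amodel n k := by
  classical
  rw [Amodel, Finset.mem_filter, Finset.mem_powerset]
  refine ⟨Finset.filter_subset _ _, Eset_card h1 hg, ?_⟩
  intro x hx hc
  rw [Eset, Finset.mem_filter] at hx hc
  obtain ⟨hxI, hxB⟩ := hx
  obtain ⟨hcI, hcB⟩ := hc
  rw [modelIcc, Finset.mem_Icc] at hxI
  rcases le_or_gt (-(n:ℤ)-1) x with hcase | hcase
  · have ha : x = ((x + n + 1).toNat : ℤ) - n - 1 := by omega
    rcases hg (x + n + 1).toNat with h | h
    · exact hxB (by rwa [← ha] at h)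
    · refine hcB ?_
      have : -((x + n + 1).toNat : ℤ) - n - 1 = sigm n x := by rw [sigm_def]; omega
      rwa [this] at h
  · set y := sigm n x with hy
    have hyx : x = sigm n y := by rw [hy, sigm_sigm]
    have hb : -(n:ℤ)-1 ≤ y := by rw [hy, sigm_def]; omega
    have ha : y = ((y + n + 1).toNat : ℤ) - n - 1 := by omega
    rcases hg (y + n + 1).toNat with h | h
    · exact hcB (by rwa [← ha] at h)
    · refine hxB ?_
      have : -((y + n + 1).toNat : ℤ) - n - 1 = x := by
        rw [hyx, sigm_def]; omega
      rwa [this] at h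

lemma Bset_determines {μ ν : YPartition} (h : Bset μ = Bset ν) : μ = ν := by
  have key : ∀ (μ' ν' : YPartition), Bset μ' = Bset ν' →
      ∀ i, (∀ j, j < i → μ'.f j = ν'.f j) → μ'.f i ≤ ν'.f i := by
    intro μ' ν' hB i hj
    rcases Nat.eq_zero_or_pos i with rfl | hi
    · rw [μ'.f_zero, ν'.f_zero]
    have hx : ((μ'.f i : ℤ) - i) ∈ Bset ν' := by
      rw [← hB]; exact ⟨i, hi, rfl⟩
    obtain ⟨j, hj1, hx⟩ := hx
    rcases Nat.lt_or_ge j i with hlt | hge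
    · exfalso
      have hfj : ν'.f j = μ'.f j := (hj j hlt).symm
      rw [hfj] at hx
      have := f_sub_strictAnti μ' hj1 hlt
      omega
    · rcases Nat.eq_or_lt_of_le hge with rfl | hlt
      · omega
      · have := f_sub_strictAnti ν' hi hlt
        omega
  apply ext'
  funext i
  induction i using Nat.strong_induction_on with
  | _ i ih =>
    exact le_antisymm (key μ ν h i ih) (key ν μ h.symm i (fun j hj => (ih j hj).symm))

lemma Eset_inj {n k : ℕ} {μ ν : YPartition} (hμ1 : μ.f 1 ≤ k) (hμg : Good n μ)
    (hν1 : ν.f 1 ≤ k) (hνg : Good n ν) (h : Eset n k μ = Eset n k ν) : μ = ν := by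
  classical
  apply Bset_determines
  have hlμ := len_le_M hμ1 hμg
  have hlν := len_le_M hν1 hνg
  have key : ∀ (μ' ν' : YPartition), μ'.f 1 ≤ k → ν'.f 1 ≤ k → μ'.len ≤ 2*n+k+1 →
      ν'.len ≤ 2*n+k+1 → Eset n k μ' = Eset n k ν' → Bset μ' ⊆ Bset ν' := by
    intro μ' ν' h1 h2 hl1 hl2 hE x hx
    rcases le_or_gt (-(2*(n:ℤ)+k+1)) x with hge | hlt
    · have hxI : x ∈ modelIcc n k := by
        rw [modelIcc, Finset.mem_Icc]
        have := Bset_le hx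
        have : (μ'.f 1 : ℤ) ≤ k := by exact_mod_cast h1
        omega
      by_contra hc
      have : x ∈ Eset n k ν' := by rw [Eset, Finset.mem_filter]; exact ⟨hxI, hc⟩
      rw [← hE, Eset, Finset.mem_filter] at this
      exact this.2 hx
    · obtain ⟨i, hi, rfl⟩ := hx
      have hi2 : 2*n+k+1 < i := by
        by_contra hc
        push_neg at hc
        have : (0:ℤ) ≤ μ'.f i := by positivity
        have : (i:ℤ) ≤ 2*n+k+1 := by exact_mod_cast hc
        omega
      have hf : μ'.f i = 0 := f_eq_zero (by omega)
      have hf2 : ν'.f i = 0 := f_eq_zero (by omega)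
      refine ⟨i, hi, ?_⟩
      rw [hf2, hf]
  exact le_antisymm (key μ ν hμ1 hν1 hlμ hlν h) (key ν μ hν1 hμ1 hlν hlμ h.symm)

/-! ### Constructing a partition from model data -/

section OfBeta

variable {M : ℕ} {G : Finset ℤ} (hcard : G.card = M) (hlo : ∀ x ∈ G, -(M:ℤ) ≤ x)

/-- Auxiliary: the `i`-th largest element of `G` (for `1 ≤ i ≤ M`). -/
noncomputable def betaFun (hcard : G.card = M) (i : ℕ) : ℤ :=
  if h : 1 ≤ i ∧ i ≤ M then (G.orderIsoOfFin hcard ⟨M - i, by omega⟩ : ℤ) else -(i:ℤ)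

lemma betaFun_mem {i : ℕ} (h1 : 1 ≤ i) (h2 : i ≤ M) : betaFun hcard i ∈ G := by
  rw [betaFun, dif_pos ⟨h1, h2⟩]
  exact (G.orderIsoOfFin hcard _).2

include hlo in
lemma betaFun_ge {i : ℕ} (h1 : 1 ≤ i) (h2 : i ≤ M) : -(i:ℤ) ≤ betaFun hcard i := by
  classical
  by_contra hc
  push_neg at hc
  rw [betaFun, dif_pos ⟨h1, h2⟩] at hc
  have hmlt : ∀ m ∈ Finset.range (M - i + 1), m < M := by
    intro m hm; rw [Finset.mem_range] at hm; omega
  have hcle : M - i + 1 ≤ (G.filter (fun x => x ≤ -(i:ℤ)-1)).card := by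
    rw [← Finset.card_range (M - i + 1), ← Finset.card_attachFin _ hmlt]
    apply Finset.card_le_card_of_injOn (fun j => (G.orderIsoOfFin hcard j : ℤ))
    · intro j hj
      rw [Finset.mem_coe, Finset.mem_attachFin, Finset.mem_range] at hj
      rw [Finset.mem_coe, Finset.mem_filter]
      refine ⟨(G.orderIsoOfFin hcard _).2, ?_⟩
      have hmono : (G.orderIsoOfFin hcard j : ℤ)
          ≤ (G.orderIsoOfFin hcard ⟨M - i, by omega⟩ : ℤ) := by
        have := (G.orderIsoOfFin hcard).monotone
          (a := j) (b := ⟨M - i, by omega⟩) (by rw [Fin.le_def]; simp; omega)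
        exact_mod_cast this
      beta_reduce
      omega
    · intro a _ b _ hab
      exact (G.orderIsoOfFin hcard).injective (Subtype.coe_injective hab)
  have hle2 : (G.filter (fun x => x ≤ -(i:ℤ)-1)).card
      ≤ (Finset.Icc (-(M:ℤ)) (-(i:ℤ)-1)).card := by
    apply Finset.card_le_card
    intro x hx
    rw [Finset.mem_filter] at hx
    rw [Finset.mem_Icc]
    exact ⟨hlo x hx.1, hx.2⟩
  rw [Int.card_Icc] at hle2
  omega

lemma betaFun_gap {i j : ℕ} (h1 : 1 ≤ i) (h2 : i ≤ j) (h3 : j ≤ M) :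
    betaFun hcard j + ((j : ℤ) - i) ≤ betaFun hcard i := by
  classical
  rw [betaFun, betaFun, dif_pos ⟨by omega, h3⟩, dif_pos ⟨h1, h2.trans h3⟩]
  have hmlt : ∀ m ∈ Finset.Icc (M - j) (M - i), m < M := by
    intro m hm; rw [Finset.mem_Icc] at hm; omega
  have hcle : j - i + 1 ≤ (Finset.Icc ((G.orderIsoOfFin hcard ⟨M - j, by omega⟩ : ℤ))
      ((G.orderIsoOfFin hcard ⟨M - i, by omega⟩ : ℤ))).card := by
    have hc1 : (Finset.Icc (M - j) (M - i)).card = j - i + 1 := by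
      rw [Nat.card_Icc]; omega
    rw [← hc1, ← Finset.card_attachFin _ hmlt]
    apply Finset.card_le_card_of_injOn (fun t => (G.orderIsoOfFin hcard t : ℤ))
    · intro t ht
      rw [Finset.mem_coe, Finset.mem_attachFin, Finset.mem_Icc] at ht
      rw [Finset.mem_coe, Finset.mem_Icc]
      constructor
      · have := (G.orderIsoOfFin hcard).monotone
          (a := (⟨M - j, by omega⟩ : Fin M)) (b := t) (by rw [Fin.le_def]; simp; omega)
        exact_mod_cast this
      · have := (G.orderIsoOfFin hcard).monotone
          (a := t) (b := (⟨M - i, by omega⟩ : Fin M)) (by rw [Fin.le_def]; simp; omega)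
        exact_mod_cast this
    · intro a _ b _ hab
      exact (G.orderIsoOfFin hcard).injective (Subtype.coe_injective hab)
  rw [Int.card_Icc] at hcle
  omega

/-- The partition whose β-set is `G ∪ {x ≤ -(M+1)}`. -/
noncomputable def ofBeta (hcard : G.card = M) (hlo : ∀ x ∈ G, -(M:ℤ) ≤ x) : YPartition where
  f i := (betaFun hcard i + i).toNat
  f_zero := by
    show (betaFun hcard 0 + 0).toNat = 0
    rw [betaFun, dif_neg (by omega)]
    simp
  antitone := by
    intro i j h1 h2
    show (betaFun hcard j + j).toNat ≤ (betaFun hcard i + i).toNat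
    rcases le_or_gt j M with hj | hj
    · have := betaFun_gap hcard h1 h2 hj
      omega
    · have h3 : betaFun hcard j = -(j:ℤ) := by rw [betaFun, dif_neg (by omega)]
      rw [h3]
      omega
  ev_zero := by
    refine ⟨M + 1, fun i hi => ?_⟩
    show (betaFun hcard i + i).toNat = 0
    rw [betaFun, dif_neg (by omega)]
    omega

include hlo in
lemma ofBeta_f_sub {i : ℕ} (h1 : 1 ≤ i) (h2 : i ≤ M) :
    ((ofBeta hcard hlo).f i : ℤ) - i = betaFun hcard i := by
  have := betaFun_ge hcard hlo h1 h2
  show ((betaFun hcard i + i).toNat : ℤ) - i = _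
  omega

lemma ofBeta_f_zero {i : ℕ} (h2 : M < i) : (ofBeta hcard hlo).f i = 0 := by
  show (betaFun hcard i + i).toNat = 0
  rw [betaFun, dif_neg (by omega)]
  omega

include hlo in
lemma ofBeta_Bset : Bset (ofBeta hcard hlo) = ↑G ∪ {x : ℤ | x ≤ -(M:ℤ)-1} := by
  ext x
  constructor
  · rintro ⟨i, hi, rfl⟩
    rcases le_or_gt i M with h2 | h2
    · left
      rw [Finset.mem_coe, ofBeta_f_sub hcard hlo hi h2]
      exact betaFun_mem hcard hi h2
    · right
      rw [ofBeta_f_zero hcard hlo h2]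
      simp only [Set.mem_setOf_eq]
      push_cast
      omega
  · rintro (hx | hx)
    · rw [Finset.mem_coe] at hx
      obtain ⟨j, hj⟩ : ∃ j : Fin M, (G.orderIsoOfFin hcard j : ℤ) = x :=
        ⟨(G.orderIsoOfFin hcard).symm ⟨x, hx⟩, by simp⟩
      refine ⟨M - j.val, by omega, ?_⟩
      have hj1 : 1 ≤ M - j.val := by omega
      have hj2 : M - j.val ≤ M := by omega
      have hfin : (⟨M - (M - j.val), by omega⟩ : Fin M) = j := by
        apply Fin.ext
        simp only
        omega
      rw [ofBeta_f_sub hcard hlo hj1 hj2, betaFun, dif_pos ⟨hj1, hj2⟩, hfin, hj]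
    · simp only [Set.mem_setOf_eq] at hx
      refine ⟨(-x).toNat, by omega, ?_⟩
      rw [ofBeta_f_zero hcard hlo (by omega)]
      omega

end OfBeta

/-! ### The count of good partitions -/

lemma Eset_surj {n k : ℕ} {F : Finset ℤ} (hF : F ∈ Amodel n k) :
    ∃ μ : YPartition, μ.f 1 ≤ k ∧ Good n μ ∧ Eset n k μ = F := by
  classical
  rw [Amodel, Finset.mem_filter, Finset.mem_powerset] at hF
  obtain ⟨hsub, hcardF, hpf⟩ := hF
  set G : Finset ℤ := modelIcc n k \ F with hG
  have hcard : G.card = 2*n+k+1 := by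
    rw [hG, Finset.card_sdiff_of_subset hsub, modelIcc_card, hcardF]
    omega
  have hlo : ∀ x ∈ G, -((2*n+k+1 : ℕ):ℤ) ≤ x := by
    intro x hx
    rw [hG, Finset.mem_sdiff, modelIcc, Finset.mem_Icc] at hx
    push_cast
    omega
  set μ := ofBeta hcard hlo with hμ
  have hBset : Bset μ = ↑G ∪ {x : ℤ | x ≤ -((2*n+k+1 : ℕ):ℤ)-1} := ofBeta_Bset hcard hlo
  have hGIcc : ∀ x ∈ G, -(2*(n:ℤ)+k+1) ≤ x ∧ x ≤ (k:ℤ)-1 := by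
    intro x hx
    rw [hG, Finset.mem_sdiff, modelIcc, Finset.mem_Icc] at hx
    exact hx.1
  have hf1 : μ.f 1 ≤ k := by
    have h1 : ((μ.f 1 : ℤ)) - 1 = betaFun hcard 1 := ofBeta_f_sub hcard hlo le_rfl (by omega)
    have h2 := betaFun_mem hcard (M := 2*n+k+1) (i := 1) le_rfl (by omega)
    have h3 := (hGIcc _ h2).2
    omega
  have hGood : Good n μ := by
    intro a
    rcases le_or_gt (n+k+1) a with ha | ha
    · right
      rw [hBset]
      right
      simp only [Set.mem_setOf_eq]
      push_cast
      omega
    · have hx1 : ((a:ℤ) - n - 1) ∈ modelIcc n k := by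
        rw [modelIcc, Finset.mem_Icc]; omega
      have hx2 : (-(a:ℤ) - n - 1) ∈ modelIcc n k := by
        rw [modelIcc, Finset.mem_Icc]; omega
      by_cases hc : ((a:ℤ) - n - 1) ∈ F
      · right
        rw [hBset]
        left
        rw [Finset.mem_coe, hG, Finset.mem_sdiff]
        refine ⟨hx2, ?_⟩
        have := hpf _ hc
        rw [sigm_def] at this
        have he : -2*(n:ℤ)-2-((a:ℤ) - n - 1) = -(a:ℤ) - n - 1 := by ring
        rwa [he] at this
      · left
        rw [hBset]
        left
        rw [Finset.mem_coe, hG, Finset.mem_sdiff]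
        exact ⟨hx1, hc⟩
  refine ⟨μ, hf1, hGood, ?_⟩
  rw [Eset]
  ext x
  rw [Finset.mem_filter]
  constructor
  · rintro ⟨hxI, hxB⟩
    by_contra hc
    refine hxB ?_
    rw [hBset]
    left
    rw [Finset.mem_coe, hG, Finset.mem_sdiff]
    exact ⟨hxI, hc⟩
  · intro hxF
    refine ⟨hsub hxF, ?_⟩
    rw [hBset]
    rintro (hx | hx)
    · rw [Finset.mem_coe, hG, Finset.mem_sdiff] at hx
      exact hx.2 hxF
    · simp only [Set.mem_setOf_eq] at hx
      have := hsub hxF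
      rw [modelIcc, Finset.mem_Icc] at this
      push_cast at hx
      omega

lemma count_good (n k : ℕ) :
    {μ : YPartition | μ.f 1 ≤ k ∧ Good n μ}.ncard = 2^k * Nat.choose (n+k) k := by
  have hinj : Set.InjOn (Eset n k) {μ : YPartition | μ.f 1 ≤ k ∧ Good n μ} := by
    intro μ hμ ν hν h
    exact Eset_inj hμ.1 hμ.2 hν.1 hν.2 h
  have himg : Eset n k '' {μ : YPartition | μ.f 1 ≤ k ∧ Good n μ} = ↑(Amodel n k) := by
    ext F
    constructor
    · rintro ⟨μ, hμ, rfl⟩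
      exact Eset_mem_Amodel hμ.1 hμ.2
    · intro hF
      obtain ⟨μ, h1, h2, h3⟩ := Eset_surj (Finset.mem_coe.mp hF)
      exact ⟨μ, ⟨h1, h2⟩, h3⟩
  rw [← Set.ncard_image_of_injOn hinj, himg, Set.ncard_coe_finset, Amodel_card]

/-! ### The canonical border strip removal -/

/-- Remove row `r` from `μ` and decrement all later rows: the canonical ν. -/
def removeRow (μ : YPartition) (r : ℕ) : YPartition where
  f i := if i = 0 then 0 else if i < r then μ.f i else μ.f (i+1) - 1
  f_zero := by simp
  antitone := by
    intro i j h1 h2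
    have ha := μ.antitone h1 h2
    have hb := μ.antitone h1 (by omega : i ≤ j + 1)
    have hc := μ.antitone (by omega : 1 ≤ i + 1) (by omega : i + 1 ≤ j + 1)
    split_ifs <;> omega
  ev_zero := by
    obtain ⟨N, hN⟩ := μ.ev_zero
    refine ⟨N + r + 1, fun i hi => ?_⟩
    have hi0 : i ≠ 0 := by omega
    simp only [if_neg hi0]
    rcases lt_or_ge i r with h | h
    · rw [if_pos h, hN i (by omega)]
    · rw [if_neg (by omega), hN (i+1) (by omega)]

lemma removeRow_f_eq (μ : YPartition) (r i : ℕ) :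
    (removeRow μ r).f i
      = if i = 0 then 0 else if i < r then μ.f i else μ.f (i+1) - 1 := rfl

lemma removeRow_f_lt {μ : YPartition} {r i : ℕ} (h1 : i < r) :
    (removeRow μ r).f i = μ.f i := by
  rw [removeRow_f_eq]
  split_ifs with h0
  · rw [h0, μ.f_zero]
  · rfl

lemma removeRow_f_ge {μ : YPartition} {r i : ℕ} (h0 : 1 ≤ r) (h1 : r ≤ i) :
    (removeRow μ r).f i = μ.f (i+1) - 1 := by
  rw [removeRow_f_eq, if_neg (by omega), if_neg (by omega)]

lemma cell_iff {μ : YPartition} {r : ℕ} (hr1 : 1 ≤ r) (i j : ℕ) :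
    (i, j) ∈ cells μ (removeRow μ r)
      ↔ r ≤ i ∧ i ≤ μ.len ∧ 1 ≤ j ∧ μ.f (i+1) ≤ j ∧ j ≤ μ.f i := by
  rw [cells, Set.mem_setOf_eq]
  simp only
  constructor
  · rintro ⟨h1, h2, h3⟩
    have hiL : i ≤ μ.len := f_le_len (by omega)
    have hir : r ≤ i := by
      by_contra hc
      rw [removeRow_f_lt (by omega)] at h2
      omega
    rw [removeRow_f_ge hr1 hir] at h2
    refine ⟨hir, hiL, by omega, by omega, h3⟩
  · rintro ⟨h1, h2, h3, h4, h5⟩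
    refine ⟨by omega, ?_, h5⟩
    rw [removeRow_f_ge hr1 h1]
    omega

lemma tele_sum (f : ℕ → ℕ) (r : ℕ) (hm : ∀ i j, 1 ≤ i → i ≤ j → f j ≤ f i) :
    ∀ L, 1 ≤ r → r ≤ L → (∀ i, r ≤ i → i ≤ L → 1 ≤ f i) →
    ∑ i ∈ Finset.Icc r L, (f i + 1 - max (f (i+1)) 1) = f r + L - r - (max (f (L+1)) 1 - 1) := by
  intro L
  induction L with
  | zero => intro h1 h2 _; interval_cases r <;> omega
  | succ L ih =>
    intro h1 h2 hpos
    rcases Nat.eq_or_lt_of_le h2 with heq | hlt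
    · rw [heq, Finset.Icc_self, Finset.sum_singleton]
      have hf : f (L+1+1) ≤ f (L+1) := hm (L+1) (L+1+1) (by omega) (by omega)
      have h1f : 1 ≤ f (L+1) := hpos (L+1) (by omega) (by omega)
      have hmax1 : 1 ≤ max (f (L+1+1)) 1 := le_max_right _ _
      have hmax2 : max (f (L+1+1)) 1 ≤ f (L+1) := max_le hf h1f
      omega
    · have hrL : r ≤ L := by omega
      rw [Finset.sum_Icc_succ_top h2, ih h1 hrL (fun i hi hi2 => hpos i hi (by omega))]
      have hf1 : 1 ≤ f (L+1) := hpos (L+1) (by omega) le_rfl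
      have hf2 : f (L+1+1) ≤ f (L+1) := hm (L+1) (L+1+1) (by omega) (by omega)
      have hf3 : f (L+1) ≤ f r := hm r (L+1) (by omega) (by omega)
      rw [max_eq_left hf1]
      have hmax1 : 1 ≤ max (f (L+1+1)) 1 := le_max_right _ _
      have hmax2 : max (f (L+1+1)) 1 ≤ f (L+1) := max_le hf2 hf1
      omega

open Classical in
lemma cells_finset {μ : YPartition} {r : ℕ} (hr1 : 1 ≤ r) :
    cells μ (removeRow μ r)
      = ↑((Finset.Icc r μ.len).biUnion
          (fun i => (Finset.Icc (max (μ.f (i+1)) 1) (μ.f i)).image (fun j => (i, j)))) := by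
  ext c
  obtain ⟨i, j⟩ := c
  rw [cell_iff hr1, Finset.coe_biUnion]
  simp only [Set.mem_iUnion, Finset.mem_coe, Finset.mem_Icc, Finset.mem_image]
  constructor
  · rintro ⟨h1, h2, h3, h4, h5⟩
    exact ⟨i, ⟨h1, h2⟩, j, ⟨max_le h4 h3, h5⟩, rfl⟩
  · rintro ⟨i', hi', j', hj', hh⟩
    have e1 : i' = i := congrArg Prod.fst hh
    have e2 : j' = j := congrArg Prod.snd hh
    have h4 : μ.f (i' + 1) ≤ j' := le_trans (le_max_left _ _) hj'.1
    have h3 : 1 ≤ j' := le_trans (le_max_right _ _) hj'.1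
    rw [← e1, ← e2]
    exact ⟨hi'.1, hi'.2, h3, h4, hj'.2⟩

lemma stripSize_removeRow {μ : YPartition} {r : ℕ} (hr1 : 1 ≤ r) (hrL : r ≤ μ.len) :
    stripSize μ (removeRow μ r) = μ.f r + μ.len - r := by
  classical
  rw [stripSize, cells_finset hr1, Set.ncard_coe_finset]
  rw [Finset.card_biUnion]
  · have hterm : ∀ i ∈ Finset.Icc r μ.len,
        ((Finset.Icc (max (μ.f (i+1)) 1) (μ.f i)).image (fun j => (i, j))).card
          = μ.f i + 1 - max (μ.f (i+1)) 1 := by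
      intro i hi
      rw [Finset.card_image_of_injective _ (fun a b hab => congrArg Prod.snd hab),
        Nat.card_Icc]
    rw [Finset.sum_congr rfl hterm]
    have := tele_sum μ.f r (fun i j h1 h2 => μ.antitone h1 h2) μ.len hr1 hrL
      (fun i hi hi2 => one_le_f (by omega) hi2)
    rw [this]
    rw [f_eq_zero (by omega : μ.len < μ.len + 1)]
    simp
  · intro a _ b _ hab
    rw [Function.onFun, Finset.disjoint_left]
    intro c hc hc2
    rw [Finset.mem_image] at hc hc2
    obtain ⟨j1, _, rfl⟩ := hc
    obtain ⟨j2, _, hj2⟩ := hc2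
    exact hab (congrArg Prod.fst hj2).symm

lemma cols_removeRow {μ : YPartition} {r : ℕ} (hr1 : 1 ≤ r) (hrL : r ≤ μ.len) :
    cols μ (removeRow μ r) = μ.f r := by
  classical
  have himg : Prod.snd '' cells μ (removeRow μ r) = ↑(Finset.Icc 1 (μ.f r)) := by
    ext j
    constructor
    · rintro ⟨⟨i, j'⟩, hc, rfl⟩
      rw [cell_iff hr1] at hc
      rw [Finset.coe_Icc, Set.mem_Icc]
      have := μ.antitone hr1 hc.1
      simp only
      omega
    · intro hj
      rw [Finset.coe_Icc, Set.mem_Icc] at hj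
      set i := Nat.findGreatest (fun i => j ≤ μ.f i) μ.len with hi
      have hir : r ≤ i := Nat.le_findGreatest hrL hj.2
      have hiL : i ≤ μ.len := Nat.findGreatest_le _
      have hfi : j ≤ μ.f i := Nat.findGreatest_spec (P := fun i => j ≤ μ.f i) (by omega) hj.2
      have hnext : μ.f (i+1) ≤ j := by
        rcases Nat.eq_or_lt_of_le hiL with heq | hlt
        · rw [heq, f_eq_zero (by omega)]
          omega
        · have hgt : Nat.findGreatest (fun i => j ≤ μ.f i) μ.len < i + 1 := by
            rw [← hi]
            omega
          have := Nat.findGreatest_is_greatest hgt (by omega : i + 1 ≤ μ.len)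
          omega
      exact ⟨(i, j), (cell_iff hr1 i j).mpr ⟨hir, hiL, hj.1, hnext, hfi⟩, rfl⟩
  rw [cols, himg, Set.ncard_coe_finset, Nat.card_Icc]
  omega

/-! ### The canonical strip is a border strip -/

lemma mem_cells_iff {μ ν : YPartition} {i j : ℕ} :
    (i, j) ∈ cells μ ν ↔ 1 ≤ i ∧ ν.f i < j ∧ j ≤ μ.f i := Iff.rfl

lemma adj_symm {a b : ℕ × ℕ} (h : Adj a b) : Adj b a := by
  rw [Adj] at h ⊢
  tauto

lemma horiz_path {μ ν : YPartition} :
    ∀ d i j j', j - j' = d → (i, j) ∈ cells μ ν → (i, j') ∈ cells μ ν → j' ≤ j →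
    Relation.ReflTransGen
      (fun x y => x ∈ cells μ ν ∧ y ∈ cells μ ν ∧ Adj x y) (i, j) (i, j') := by
  intro d
  induction d with
  | zero =>
    intro i j j' hd _ _ hle
    have : j' = j := by omega
    rw [this]
  | succ d ih =>
    intro i j j' hd hj hj' hle
    rw [mem_cells_iff] at hj hj'
    have hlt : j' < j := by omega
    have hmem : (i, j-1) ∈ cells μ ν := mem_cells_iff.mpr ⟨hj.1, by omega, by omega⟩
    have hstep : Relation.ReflTransGen
        (fun x y => x ∈ cells μ ν ∧ y ∈ cells μ ν ∧ Adj x y) (i, j) (i, j-1) := by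
      apply Relation.ReflTransGen.single
      refine ⟨mem_cells_iff.mpr hj, hmem, ?_⟩
      rw [Adj]
      left
      exact ⟨rfl, Or.inr (by show j - 1 + 1 = j; omega)⟩
    exact hstep.trans (ih i (j-1) j' (by omega) hmem (mem_cells_iff.mpr hj') (by omega))

lemma removeRow_desc {μ : YPartition} {r : ℕ} (hr1 : 1 ≤ r) :
    ∀ d i j, μ.len - i = d → (i, j) ∈ cells μ (removeRow μ r) →
    Relation.ReflTransGen
      (fun x y => x ∈ cells μ (removeRow μ r) ∧ y ∈ cells μ (removeRow μ r) ∧ Adj x y)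
      (i, j) (μ.len, 1) := by
  intro d
  induction d with
  | zero =>
    intro i j hd hc
    have hiff := (cell_iff hr1 i j).mp hc
    have hiL : i = μ.len := by omega
    have hc1 : (i, 1) ∈ cells μ (removeRow μ r) := by
      rw [cell_iff hr1]
      have hz : μ.f (i+1) = 0 := f_eq_zero (by omega)
      exact ⟨hiff.1, hiff.2.1, le_rfl, by omega, by omega⟩
    rw [← hiL]
    exact horiz_path (j - 1) i j 1 rfl hc hc1 hiff.2.2.1
  | succ d ih =>
    intro i j hd hc
    have hiff := (cell_iff hr1 i j).mp hc
    have hiL : i < μ.len := by omega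
    have hfi1 : 1 ≤ μ.f (i+1) := one_le_f (by omega) (by omega)
    have hc1 : (i, μ.f (i+1)) ∈ cells μ (removeRow μ r) := by
      rw [cell_iff hr1]
      exact ⟨hiff.1, hiff.2.1, hfi1, le_rfl, μ.antitone (by omega) (by omega)⟩
    have hc2 : (i+1, μ.f (i+1)) ∈ cells μ (removeRow μ r) := by
      rw [cell_iff hr1]
      exact ⟨by omega, by omega, hfi1, μ.antitone (by omega) (by omega), le_rfl⟩
    have hpath1 := horiz_path (j - μ.f (i+1)) i j (μ.f (i+1)) rfl hc hc1 hiff.2.2.2.1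
    have hstep : Relation.ReflTransGen
        (fun x y => x ∈ cells μ (removeRow μ r) ∧ y ∈ cells μ (removeRow μ r) ∧ Adj x y)
        (i, μ.f (i+1)) (i+1, μ.f (i+1)) := by
      apply Relation.ReflTransGen.single
      refine ⟨hc1, hc2, ?_⟩
      rw [Adj]
      right
      exact ⟨rfl, Or.inl rfl⟩
    exact (hpath1.trans hstep).trans (ih (i+1) (μ.f (i+1)) (by omega) hc2)

lemma removeRow_box {μ : YPartition} {r : ℕ} (hr1 : 1 ≤ r) (hrL : r ≤ μ.len) :
    (μ.len, 1) ∈ cells μ (removeRow μ r) := by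
  rw [cell_iff hr1]
  have hz : μ.f (μ.len + 1) = 0 := f_eq_zero (by omega)
  have h1 : 1 ≤ μ.f μ.len := one_le_f (le_trans hr1 hrL) le_rfl
  exact ⟨hrL, le_rfl, le_rfl, by omega, h1⟩

lemma removeRow_isBorderStrip {μ : YPartition} {r : ℕ} (hr1 : 1 ≤ r) (hrL : r ≤ μ.len) :
    IsBorderStrip μ (removeRow μ r) := by
  refine ⟨?_, ⟨(μ.len, 1), removeRow_box hr1 hrL⟩, ?_, ?_⟩
  · -- Sub
    intro i
    rcases lt_or_ge i r with h | h
    · rw [removeRow_f_lt h]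
    · rw [removeRow_f_ge hr1 h]
      rcases Nat.eq_zero_or_pos i with rfl | hi
      · omega
      · have := μ.antitone hi (by omega : i ≤ i + 1)
        omega
  · -- connected
    intro a ha b hb
    obtain ⟨ia, ja⟩ := a
    obtain ⟨ib, jb⟩ := b
    have h1 := removeRow_desc hr1 (μ.len - ia) ia ja rfl ha
    have h2 := removeRow_desc hr1 (μ.len - ib) ib jb rfl hb
    have hsym : Symmetric (fun x y => x ∈ cells μ (removeRow μ r)
        ∧ y ∈ cells μ (removeRow μ r) ∧ Adj x y) := by
      intro x y ⟨hx, hy, hadj⟩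
      exact ⟨hy, hx, adj_symm hadj⟩
    exact h1.trans ((Std.Symm.symm (self := @Relation.ReflTransGen.symmetric _ _ ⟨fun a b h => hsym h⟩) _ _ h2))
  · -- no 2x2
    rintro ⟨i, j, hc1, hc2, hc3, hc4⟩
    rw [cell_iff hr1] at hc1 hc2 hc3 hc4
    have e1 : j = μ.f (i+1) := by
      have := hc1.2.2.2.1
      have := hc2.2.2.2.2
      omega
    have e2 : j + 1 = μ.f (i+1) := by
      have := hc3.2.2.2.1
      have := hc4.2.2.2.2
      omega
    omega

/-! ### Soundness: any valid strip is the canonical one -/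

lemma crossing {μ ν : YPartition} {t : ℕ} {a b : ℕ × ℕ}
    (h : Relation.ReflTransGen
      (fun x y => x ∈ cells μ ν ∧ y ∈ cells μ ν ∧ Adj x y) a b)
    (ha : a.1 ≤ t) (hb : t < b.1) :
    ∃ j, (t, j) ∈ cells μ ν ∧ (t+1, j) ∈ cells μ ν := by
  induction h with
  | refl => omega
  | tail hac hcb ih =>
    rename_i c b'
    obtain ⟨hc_mem, hb_mem, hadj⟩ := hcb
    rcases le_or_gt c.1 t with hct | hct
    · rw [Adj] at hadj
      rcases hadj with ⟨heq, _⟩ | ⟨hcol, hrow⟩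
      · omega
      · have hb1 : b'.1 = c.1 + 1 := by omega
        have hc1 : c.1 = t := by omega
        refine ⟨c.2, ?_, ?_⟩
        · have hcc : c = (t, c.2) := by
            rw [Prod.ext_iff]
            exact ⟨hc1, rfl⟩
          rw [← hcc]
          exact hc_mem
        · have hbb : b' = (t+1, c.2) := by
            rw [Prod.ext_iff]
            refine ⟨by omega, hcol.symm⟩
          rw [← hbb]
          exact hb_mem
    · exact ih hct

lemma sound {n : ℕ} {μ ν : YPartition} (hlen : n < μ.len) (hbs : IsBorderStrip μ ν)
    (hsize : stripSize μ ν = 2 * (μ.len - n - 1)) (hbox : (μ.len, 1) ∈ cells μ ν) :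
    ∃ r, 1 ≤ r ∧ r ≤ μ.len ∧ μ.f r + μ.len = 2 * (μ.len - n - 1) + r
      ∧ ν = removeRow μ r := by
  obtain ⟨hsub, hne, hconn, hno⟩ := hbs
  have hbox' := mem_cells_iff.mp hbox
  have hνL : ν.f μ.len = 0 := by omega
  have hex : ∃ i, ν.f i < μ.f i := ⟨μ.len, by omega⟩
  have hr : ν.f (Nat.find hex) < μ.f (Nat.find hex) := Nat.find_spec hex
  set r := Nat.find hex with hrdef
  have hrmin : ∀ i, i < r → ¬(ν.f i < μ.f i) := fun i h => Nat.find_min hex h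
  have hr1 : 1 ≤ r := by
    by_contra h0
    have h0' : r = 0 := by omega
    rw [h0', μ.f_zero, ν.f_zero] at hr
    omega
  have hrL : r ≤ μ.len := f_le_len (by omega)
  have key : ∀ t, r ≤ t → t < μ.len → ν.f t + 1 = μ.f (t+1) := by
    intro t ht1 ht2
    have hcr : (r, ν.f r + 1) ∈ cells μ ν := mem_cells_iff.mpr ⟨hr1, by omega, by omega⟩
    obtain ⟨j, h1, h2⟩ := crossing (hconn _ hcr _ hbox) (by simpa using ht1) (by simpa using ht2)
    rw [mem_cells_iff] at h1 h2
    have ht0 : 1 ≤ t := by omega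
    have hle : ν.f t + 1 ≤ μ.f (t+1) := by omega
    by_contra hc
    apply hno
    have ha1 := μ.antitone ht0 (by omega : t ≤ t + 1)
    have ha2 := ν.antitone ht0 (by omega : t ≤ t + 1)
    refine ⟨t, ν.f t + 1, ?_, ?_, ?_, ?_⟩ <;> rw [mem_cells_iff]
    · exact ⟨ht0, by omega, by omega⟩
    · exact ⟨by omega, by omega, by omega⟩
    · exact ⟨ht0, by omega, by omega⟩
    · exact ⟨by omega, by omega, by omega⟩
  have hνeq : ν = removeRow μ r := by
    apply ext'
    funext i
    rcases Nat.eq_zero_or_pos i with rfl | hi1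
    · rw [ν.f_zero, (removeRow μ r).f_zero]
    rcases lt_or_ge i r with hir | hir
    · rw [removeRow_f_lt hir]
      have h1 := hrmin i hir
      have h2 := hsub i
      omega
    · rw [removeRow_f_ge hr1 hir]
      rcases lt_or_ge i μ.len with hiL | hiL
      · have := key i hir hiL
        omega
      · have hz : μ.f (i+1) = 0 := f_eq_zero (by omega)
        rcases Nat.eq_or_lt_of_le hiL with heq | hlt
        · rw [heq] at hνL
          omega
        · have h2 := hsub i
          have hz2 : μ.f i = 0 := f_eq_zero (by omega)
          omega
  refine ⟨r, hr1, hrL, ?_, hνeq⟩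
  rw [hνeq] at hsize
  rw [stripSize_removeRow hr1 hrL] at hsize
  omega

/-! ### The β-set under strip removal, and the main equivalence -/

lemma removeRow_len_le {μ : YPartition} {r : ℕ} (hr1 : 1 ≤ r) (hrL : r ≤ μ.len) :
    (removeRow μ r).len ≤ μ.len - 1 := by
  apply len_le
  intro i hi
  rw [removeRow_f_ge hr1 (by omega)]
  rw [f_eq_zero (by omega)]

lemma Bset_removeRow {μ : YPartition} {r : ℕ} (hr1 : 1 ≤ r) (hrL : r ≤ μ.len) :
    Bset (removeRow μ r)
      = (Bset μ \ {(μ.f r : ℤ) - r}) ∪ {-(μ.len : ℤ)} := by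
  have hL1 : 1 ≤ μ.len := le_trans hr1 hrL
  have hfr : 1 ≤ μ.f r := one_le_f hr1 hrL
  ext x
  constructor
  · rintro ⟨i, hi1, hx⟩
    rcases lt_or_ge i r with hir | hir
    · rw [removeRow_f_lt hir] at hx
      left
      refine ⟨⟨i, hi1, hx⟩, ?_⟩
      have := f_sub_strictAnti μ hi1 (show i < r by omega)
      simp only [Set.mem_singleton_iff]
      omega
    · rw [removeRow_f_ge hr1 hir] at hx
      rcases lt_or_ge i μ.len with hiL | hiL
      · have hf1 : 1 ≤ μ.f (i+1) := one_le_f (by omega) (by omega)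
        left
        refine ⟨⟨i+1, by omega, by omega⟩, ?_⟩
        have := f_sub_strictAnti μ hr1 (show r < i + 1 by omega)
        simp only [Set.mem_singleton_iff]
        omega
      · have hz : μ.f (i+1) = 0 := f_eq_zero (by omega)
        rcases Nat.eq_or_lt_of_le hiL with heq | hlt
        · right
          simp only [Set.mem_singleton_iff]
          omega
        · left
          have hzi : μ.f i = 0 := f_eq_zero (by omega)
          refine ⟨⟨i, hi1, by rw [hzi]; rw [hz] at hx; push_cast at hx ⊢; omega⟩, ?_⟩
          simp only [Set.mem_singleton_iff]
          rw [hz] at hx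
          push_cast at hx
          omega
  · rintro (⟨⟨i, hi1, hx⟩, hne⟩ | hL)
    · simp only [Set.mem_singleton_iff] at hne
      rcases lt_or_ge i r with hir | hir
      · exact ⟨i, hi1, by rw [removeRow_f_lt hir]; exact hx⟩
      · rcases Nat.eq_or_lt_of_le hir with heq | hlt
        · exfalso
          rw [← heq] at hx
          exact hne hx.symm
        · rcases le_or_gt i μ.len with hiL | hiL
          · have hf1 : 1 ≤ μ.f i := one_le_f hi1 hiL
            refine ⟨i - 1, by omega, ?_⟩
            rw [removeRow_f_ge hr1 (by omega)]
            have : i - 1 + 1 = i := by omega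
            rw [this]
            push_cast
            omega
          · have hzi : μ.f i = 0 := f_eq_zero hiL
            refine ⟨i, hi1, ?_⟩
            rw [removeRow_f_ge hr1 (by omega), f_eq_zero (by omega)]
            rw [hzi] at hx
            push_cast at hx ⊢
            omega
    · simp only [Set.mem_singleton_iff] at hL
      refine ⟨μ.len, hL1, ?_⟩
      rw [removeRow_f_ge hr1 hrL, f_eq_zero (by omega)]
      rw [hL]
      push_cast
      omega

lemma good_iff_step {n : ℕ} {μ : YPartition} {r : ℕ} (hr1 : 1 ≤ r) (hrL : r ≤ μ.len)
    (hL2 : n + 2 ≤ μ.len) (hveq : (μ.f r : ℤ) - r = (μ.len : ℤ) - 2*n - 2) :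
    Good n μ ↔ Good n (removeRow μ r) := by
  have hvB : ((μ.f r : ℤ) - r) ∈ Bset μ := ⟨r, hr1, rfl⟩
  constructor
  · intro hg a
    rw [Bset_removeRow hr1 hrL]
    by_cases hA : (a : ℤ) = (μ.len : ℤ) - n - 1
    · right
      right
      simp only [Set.mem_singleton_iff]
      omega
    · rcases hg a with h | h
      · left
        left
        refine ⟨h, ?_⟩
        simp only [Set.mem_singleton_iff]
        omega
      · right
        left
        refine ⟨h, ?_⟩
        simp only [Set.mem_singleton_iff]
        have : (0:ℤ) ≤ a := by positivity
        omega
  · intro hg a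
    rcases hg a with h | h <;> rw [Bset_removeRow hr1 hrL] at h <;>
      rcases h with ⟨hB, _⟩ | hL
    · exact Or.inl hB
    · exfalso
      simp only [Set.mem_singleton_iff] at hL
      have : (0:ℤ) ≤ a := by positivity
      omega
    · exact Or.inr hB
    · left
      simp only [Set.mem_singleton_iff] at hL
      exact ⟨r, hr1, by omega⟩

lemma good_of_len_le {n : ℕ} {μ : YPartition} (h : μ.len ≤ n) : Good n μ := by
  intro a
  right
  refine ⟨a + n + 1, by omega, ?_⟩
  rw [f_eq_zero (by omega)]
  push_cast
  ring

lemma exists_r {n : ℕ} {μ : YPartition} (hg : Good n μ) (hL : n < μ.len) :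
    ∃ r, 1 ≤ r ∧ r ≤ μ.len ∧ n + 2 ≤ μ.len
      ∧ (μ.f r : ℤ) - r = (μ.len : ℤ) - 2*n - 2 := by
  have hL1 : 1 ≤ μ.len := by omega
  rcases hg (μ.len - n - 1) with h | h
  · obtain ⟨i, hi1, hx⟩ := h
    have hcast : ((μ.len - n - 1 : ℕ) : ℤ) = (μ.len : ℤ) - n - 1 := by
      push_cast
      omega
    rw [hcast] at hx
    have hiL : i ≤ μ.len := by
      by_contra hc
      push_neg at hc
      rw [f_eq_zero hc] at hx
      push_cast at hx
      omega
    have hf1 : 1 ≤ μ.f i := one_le_f hi1 hiL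
    have hL2 : n + 2 ≤ μ.len := by
      by_contra hc
      push_neg at hc
      have hLn : μ.len = n + 1 := by omega
      rw [hLn] at hx
      omega
    exact ⟨i, hi1, hiL, hL2, by omega⟩
  · exfalso
    have hcast : -((μ.len - n - 1 : ℕ) : ℤ) - n - 1 = -(μ.len : ℤ) := by
      push_cast
      omega
    rw [hcast] at h
    exact neg_len_not_mem hL1 h

theorem modRule_iff_good (n : ℕ) (μ : YPartition) :
    (∃ i τ, ModRule n μ i τ) ↔ Good n μ := by
  suffices h : ∀ m (μ : YPartition), μ.len ≤ m → ((∃ i τ, ModRule n μ i τ) ↔ Good n μ) from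
    h μ.len μ le_rfl
  intro m
  induction m with
  | zero =>
    intro μ hm
    constructor
    · intro _
      exact good_of_len_le (by omega)
    · intro _
      exact ⟨0, μ, ModRule.base μ (by omega)⟩
  | succ m ih =>
    intro μ hm
    rcases le_or_gt μ.len n with hn | hn
    · constructor
      · intro _
        exact good_of_len_le hn
      · intro _
        exact ⟨0, μ, ModRule.base μ hn⟩
    · constructor
      · rintro ⟨i, τ, h⟩
        cases h with
        | base _ h' => omega
        | step μ2 ν τ2 i' hlen hbs hsize hbox hrec =>
          obtain ⟨r, hr1, hrL, heq, hνeq⟩ := sound hlen hbs hsize hbox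
          have hfr : 1 ≤ μ.f r := one_le_f hr1 hrL
          have hL2 : n + 2 ≤ μ.len := by omega
          have hveq : (μ.f r : ℤ) - r = (μ.len : ℤ) - 2*n - 2 := by
            have h1 : (μ.f r : ℤ) + μ.len = 2 * ((μ.len : ℤ) - n - 1) + r := by
              push_cast [← heq]
              omega
            omega
          have hlenν : ν.len ≤ m := by
            rw [hνeq]
            have := removeRow_len_le hr1 hrL
            omega
          have hGoodν : Good n ν := (ih ν hlenν).mp ⟨i', τ, hrec⟩
          rw [hνeq] at hGoodν
          exact (good_iff_step hr1 hrL hL2 hveq).mpr hGoodν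
      · intro hg
        obtain ⟨r, hr1, hrL, hL2, hveq⟩ := exists_r hg hn
        have hstrip := removeRow_isBorderStrip hr1 hrL
        have hsize : stripSize μ (removeRow μ r) = 2 * (μ.len - n - 1) := by
          rw [stripSize_removeRow hr1 hrL]
          omega
        have hGoodν := (good_iff_step hr1 hrL hL2 hveq).mp hg
        have hlenν : (removeRow μ r).len ≤ m := by
          have := removeRow_len_le hr1 hrL
          omega
        obtain ⟨i, τ, hrec⟩ := (ih _ hlenν).mpr hGoodν
        exact ⟨cols μ (removeRow μ r) + i, τ,
          ModRule.step μ (removeRow μ r) τ i hn hstrip hsize (removeRow_box hr1 hrL) hrec⟩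

lemma i2_lt_top_iff {n : ℕ} {μ : YPartition} :
    i2 n μ < ⊤ ↔ ∃ i τ, ModRule n μ i τ := by
  constructor
  · intro h
    by_contra hc
    have hempty : {c : ℕ∞ | ∃ i τ, ModRule n μ i τ ∧ c = (i : ℕ∞)} = ∅ := by
      ext c
      simp only [Set.mem_setOf_eq, Set.mem_empty_iff_false, iff_false]
      rintro ⟨i, τ, hm, _⟩
      exact hc ⟨i, τ, hm⟩
    rw [i2, hempty, sInf_empty] at h
    exact lt_irrefl _ h
  · rintro ⟨i, τ, h⟩
    have hle : i2 n μ ≤ (i : ℕ∞) := sInf_le ⟨i, τ, h, rfl⟩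
    exact lt_of_le_of_lt hle (ENat.coe_lt_top i)

end YPartition

open YPartition in
/-- There are exactly `2^k · (n+k choose k)` partitions `μ` with
`μ₁ ≤ k` and `i_{2n}(μ) < ∞`. -/
theorem statement7 (n k : ℕ) :
    Set.ncard {μ : YPartition | μ.f 1 ≤ k ∧ i2 n μ < ⊤} = 2 ^ k * Nat.choose (n + k) k := by
  have hset : {μ : YPartition | μ.f 1 ≤ k ∧ i2 n μ < ⊤}
      = {μ : YPartition | μ.f 1 ≤ k ∧ Good n μ} := by
    ext μ
    simp only [Set.mem_setOf_eq]
    constructor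
    · rintro ⟨h1, h2⟩
      exact ⟨h1, (modRule_iff_good n μ).mp (i2_lt_top_iff.mp h2)⟩
    · rintro ⟨h1, h2⟩
      exact ⟨h1, i2_lt_top_iff.mpr ((modRule_iff_good n μ).mpr h2)⟩
  rw [hset]
  exact count_good n k
end
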